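/- arXiv:2305.15877 — 6 statements merged into one kernel-verified Lean document; each statement's English description precedes it below -/
import Mathlib

section
/- Let α ∈ [0,1]. For every policy π, the bias of the IPS-α estimator satisfies |B(R̂_n^α(π))| ≤ E_{x∼ν, a∼π(·|x)}[1 − π0(a|x)^{1−α}]. -/
open MeasureTheory ProbabilityTheory Real

lemma pi_map_eval' {ι : Type*} [Fintype ι] [DecidableEq ι] {Ω : Type*} [MeasurableSpace Ω]
    (μ : Measure Ω) [IsProbabilityMeasure μ] (i : ι) :
    (Measure.pi fun _ : ι => μ).map (Function.eval i) = μ := by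
  ext s hs
  rw [Measure.map_apply (measurable_pi_apply i) hs]
  have h1 : (fun f : ι → Ω => f i) ⁻¹' s
      = Set.pi Set.univ (Function.update (fun _ : ι => (Set.univ : Set Ω)) i s) :=
    (Set.univ_pi_update_univ (α := fun _ : ι => Ω) i s).symm
  rw [h1, Measure.pi_pi]
  rw [Finset.prod_eq_single i (fun j _ hj => by simp [Function.update_of_ne hj]) (by simp)]
  simp

lemma kernel_integral_eval' {K : ℕ} (m : Measure (Fin K × ℝ)) [IsProbabilityMeasure m]
    (hsupp : ∀ᵐ p ∂m, p.2 ∈ Set.Icc (-1 : ℝ) 0) (C : Fin K → ℝ) :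
    ∫ p, p.2 * C p.1 ∂m = ∑ a, (∫ p in {p : Fin K × ℝ | p.1 = a}, p.2 ∂m) * C a := by
  have hsnd : Integrable (fun p : Fin K × ℝ => p.2) m := by
    refine Integrable.mono' (integrable_const 1) measurable_snd.aestronglyMeasurable ?_
    filter_upwards [hsupp] with p hp
    rw [Real.norm_eq_abs]
    exact abs_le.2 ⟨hp.1, hp.2.trans zero_le_one⟩
  have hmeas : ∀ a : Fin K, MeasurableSet {p : Fin K × ℝ | p.1 = a} := fun a =>
    (measurableSet_singleton a).preimage measurable_fst
  have heq : ∀ p : Fin K × ℝ, p.2 * C p.1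
      = ∑ a, Set.indicator {p : Fin K × ℝ | p.1 = a} (fun p => p.2 * C a) p := by
    intro p
    rw [Finset.sum_eq_single p.1]
    · simp [Set.indicator_apply]
    · intro a _ ha
      simp [Set.indicator_apply, Set.mem_setOf_eq, ha.symm]
    · simp
  simp_rw [heq]
  rw [integral_finset_sum]
  · refine Finset.sum_congr rfl fun a _ => ?_
    rw [integral_indicator (hmeas a), integral_mul_const]
  · intro a _
    exact (hsnd.mul_const (C a)).indicator (hmeas a)

lemma kernel_integral_fst' {K : ℕ} (m : Measure (Fin K × ℝ)) [IsProbabilityMeasure m]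
    (C : Fin K → ℝ) :
    ∫ p, C p.1 ∂m = ∑ a, (m {p : Fin K × ℝ | p.1 = a}).toReal * C a := by
  have hmeas : ∀ a : Fin K, MeasurableSet {p : Fin K × ℝ | p.1 = a} := fun a =>
    (measurableSet_singleton a).preimage measurable_fst
  have heq : ∀ p : Fin K × ℝ, C p.1
      = ∑ a, Set.indicator {p : Fin K × ℝ | p.1 = a} (fun _ => C a) p := by
    intro p
    rw [Finset.sum_eq_single p.1]
    · simp [Set.indicator_apply]
    · intro a _ ha
      simp [Set.indicator_apply, Set.mem_setOf_eq, ha.symm]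
    · simp
  simp_rw [heq]
  rw [integral_finset_sum]
  · refine Finset.sum_congr rfl fun a _ => ?_
    rw [integral_indicator_const (C a) (hmeas a)]
    simp [mul_comm, Measure.real]
  · intro a _
    exact (integrable_const (C a)).indicator (hmeas a)

/-- **Bias of the IPS-α estimator.**  Off-policy contextual bandit setting with finite action
set `Fin K`, context distribution `ν`, logging policy `p0`, expected-cost function `c` taking
values in `[-1, 0]`, and a Markov kernel `κ` describing the joint distribution of the taken
action and the observed stochastic cost given a context (action marginal `p0`, cost supported
in `[-1, 0]` with conditional mean `c`).  The logged data consists of `n` i.i.d. draws from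
`ν ⊗ₘ κ`.  For `α ∈ [0,1]`, the bias of the IPS-α estimator of the risk of a policy `pl`
satisfies `|B(R̂ₙ^α(pl))| ≤ E_{x∼ν, a∼pl(·|x)}[1 − p0(a|x)^(1−α)]`. -/
theorem ips_alpha_bias_bound
    {X : Type*} [MeasurableSpace X] {K : ℕ}
    (ν : Measure X) [IsProbabilityMeasure ν]
    (p0 pl c : X → Fin K → ℝ)
    (hp0meas : ∀ a, Measurable fun x => p0 x a)
    (hplmeas : ∀ a, Measurable fun x => pl x a)
    (hcmeas : ∀ a, Measurable fun x => c x a)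
    (hp0pos : ∀ x a, 0 < p0 x a) (hp0sum : ∀ x, ∑ a, p0 x a = 1)
    (hplnn : ∀ x a, 0 ≤ pl x a) (hplsum : ∀ x, ∑ a, pl x a = 1)
    (hc : ∀ x a, c x a ∈ Set.Icc (-1 : ℝ) 0)
    (κ : Kernel X (Fin K × ℝ)) [IsMarkovKernel κ]
    (hκact : ∀ x a, κ x {p | p.1 = a} = ENNReal.ofReal (p0 x a))
    (hκsupp : ∀ x, ∀ᵐ p ∂(κ x), p.2 ∈ Set.Icc (-1 : ℝ) 0)
    (hκmean : ∀ x a, ∫ p in {p : Fin K × ℝ | p.1 = a}, p.2 ∂(κ x) = p0 x a * c x a)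
    (n : ℕ) (hn : 0 < n) (α : ℝ) (hα : α ∈ Set.Icc (0 : ℝ) 1) :
    |(∫ ω : Fin n → X × Fin K × ℝ,
          (n : ℝ)⁻¹ * ∑ i, (ω i).2.2 * pl (ω i).1 (ω i).2.1 / p0 (ω i).1 (ω i).2.1 ^ α
          ∂(Measure.pi fun _ => ν ⊗ₘ κ))
        - ∫ x, ∑ a, pl x a * c x a ∂ν|
      ≤ ∫ x, ∑ a, pl x a * (1 - p0 x a ^ (1 - α)) ∂ν := by
  have h1α : (0:ℝ) ≤ 1 - α := by linarith [hα.2]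
  have hp0le1 : ∀ x a, p0 x a ≤ 1 := fun x a => by
    rw [← hp0sum x]
    exact Finset.single_le_sum (fun b _ => (hp0pos x b).le) (Finset.mem_univ a)
  have hrpos : ∀ x a, 0 < p0 x a ^ (1 - α) := fun x a => Real.rpow_pos_of_pos (hp0pos x a) _
  have hrle1 : ∀ x a, p0 x a ^ (1 - α) ≤ 1 := fun x a =>
    Real.rpow_le_one (hp0pos x a).le (hp0le1 x a) h1α
  have hαpos : ∀ x a, 0 < p0 x a ^ α := fun x a => Real.rpow_pos_of_pos (hp0pos x a) _
  have hCnn : ∀ x a, 0 ≤ pl x a / p0 x a ^ α := fun x a =>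
    div_nonneg (hplnn x a) (hαpos x a).le
  set g : X × Fin K × ℝ → ℝ :=
    fun y => y.2.2 * pl y.1 y.2.1 / p0 y.1 y.2.1 ^ α with hgdef
  -- measurability
  have hplm : Measurable fun q : X × Fin K => pl q.1 q.2 :=
    measurable_from_prod_countable_left fun a => hplmeas a
  have hp0m : Measurable fun q : X × Fin K => p0 q.1 q.2 :=
    measurable_from_prod_countable_left fun a => hp0meas a
  have hproj : Measurable fun y : X × Fin K × ℝ => (y.1, y.2.1) :=
    measurable_fst.prodMk (measurable_fst.comp measurable_snd)
  have hgm : Measurable g := by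
    refine (Measurable.mul ?_ ?_).div ?_
    · exact measurable_snd.comp measurable_snd
    · exact hplm.comp hproj
    · exact ((Real.continuous_rpow_const hα.1).measurable.comp hp0m).comp hproj
  -- per-context integral computations
  have hnormle : ∀ x (p : Fin K × ℝ), p.2 ∈ Set.Icc (-1 : ℝ) 0 →
      ‖g (x, p)‖ ≤ pl x p.1 / p0 x p.1 ^ α := by
    intro x p hp
    have h2 : |p.2| ≤ 1 := abs_le.2 ⟨hp.1, hp.2.trans zero_le_one⟩
    have h4 : ‖g (x, p)‖ = |p.2| * pl x p.1 / p0 x p.1 ^ α := by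
      simp only [hgdef]
      rw [Real.norm_eq_abs, abs_div, abs_mul, abs_of_nonneg (hplnn x p.1),
        abs_of_nonneg (hαpos x p.1).le]
    rw [h4]
    have h3 : |p.2| * pl x p.1 ≤ pl x p.1 :=
      mul_le_of_le_one_left (hplnn x p.1) h2
    exact div_le_div_of_nonneg_right h3 (hαpos x p.1).le
  have hgxint : ∀ x, Integrable (fun p => g (x, p)) (κ x) := by
    intro x
    refine Integrable.mono' (integrable_const (∑ a, pl x a / p0 x a ^ α))
      (hgm.comp measurable_prodMk_left).aestronglyMeasurable ?_
    filter_upwards [hκsupp x] with p hp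
    exact (hnormle x p hp).trans
      (Finset.single_le_sum (fun b _ => hCnn x b) (Finset.mem_univ p.1))
  have hkey : ∀ x, ∫ p, g (x, p) ∂(κ x) = ∑ a, pl x a * c x a * p0 x a ^ (1 - α) := by
    intro x
    calc ∫ p, g (x, p) ∂(κ x)
        = ∫ p : Fin K × ℝ, p.2 * ((fun a => pl x a / p0 x a ^ α) p.1) ∂(κ x) :=
          integral_congr_ae (ae_of_all _ fun p => by simp only [hgdef]; ring)
      _ = ∑ a, (∫ p in {p : Fin K × ℝ | p.1 = a}, p.2 ∂(κ x)) * (pl x a / p0 x a ^ α) :=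
          kernel_integral_eval' (κ x) (hκsupp x) (fun a => pl x a / p0 x a ^ α)
      _ = ∑ a, pl x a * c x a * p0 x a ^ (1 - α) := by
          refine Finset.sum_congr rfl fun a _ => ?_
          rw [hκmean x a]
          have hs : p0 x a ^ (1 - α) = p0 x a / p0 x a ^ α := by
            rw [Real.rpow_sub (hp0pos x a), Real.rpow_one]
          rw [hs]
          field_simp
  have hbound1 : ∀ x, ∫ p, ‖g (x, p)‖ ∂(κ x) ≤ 1 := by
    intro x
    have hCint : Integrable (fun p : Fin K × ℝ => pl x p.1 / p0 x p.1 ^ α) (κ x) := by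
      refine Integrable.mono' (integrable_const (∑ a, pl x a / p0 x a ^ α))
        ((measurable_of_countable fun a => pl x a / p0 x a ^ α).comp
          measurable_fst).aestronglyMeasurable
        (ae_of_all _ fun p => ?_)
      rw [Real.norm_eq_abs, abs_of_nonneg (hCnn x p.1)]
      exact Finset.single_le_sum (fun b _ => hCnn x b) (Finset.mem_univ p.1)
    have h1 : ∫ p, ‖g (x, p)‖ ∂(κ x) ≤ ∫ p : Fin K × ℝ, pl x p.1 / p0 x p.1 ^ α ∂(κ x) := by
      refine integral_mono_ae (hgxint x).norm hCint ?_
      filter_upwards [hκsupp x] with p hp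
      exact hnormle x p hp
    refine h1.trans ?_
    calc ∫ p : Fin K × ℝ, (fun a => pl x a / p0 x a ^ α) p.1 ∂(κ x)
        = ∑ a, ((κ x) {p : Fin K × ℝ | p.1 = a}).toReal * (pl x a / p0 x a ^ α) :=
          kernel_integral_fst' (κ x) (fun a => pl x a / p0 x a ^ α)
      _ ≤ ∑ a, pl x a := by
          refine Finset.sum_le_sum fun a _ => ?_
          rw [hκact x a, ENNReal.toReal_ofReal (hp0pos x a).le]
          have hs : p0 x a * (pl x a / p0 x a ^ α) = pl x a * p0 x a ^ (1 - α) := by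
            rw [Real.rpow_sub (hp0pos x a), Real.rpow_one]
            field_simp
          rw [hs]
          calc pl x a * p0 x a ^ (1 - α) ≤ pl x a * 1 :=
                mul_le_mul_of_nonneg_left (hrle1 x a) (hplnn x a)
            _ = pl x a := mul_one _
      _ = 1 := hplsum x
  have hgint : Integrable g (ν ⊗ₘ κ) := by
    rw [Measure.integrable_compProd_iff hgm.aestronglyMeasurable]
    refine ⟨ae_of_all _ hgxint, ?_⟩
    refine Integrable.mono' (integrable_const 1)
      (hgm.norm.stronglyMeasurable.integral_kernel_prod_right').aestronglyMeasurable
      (ae_of_all _ fun x => ?_)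
    rw [Real.norm_eq_abs, abs_of_nonneg (integral_nonneg fun p => norm_nonneg _)]
    exact hbound1 x
  -- the i.i.d. average integral
  have heval : ∀ i : Fin n, ∫ ω : Fin n → X × Fin K × ℝ, g (ω i)
      ∂(Measure.pi fun _ => ν ⊗ₘ κ) = ∫ y, g y ∂(ν ⊗ₘ κ) := by
    intro i
    calc ∫ ω : Fin n → X × Fin K × ℝ, g (ω i) ∂(Measure.pi fun _ => ν ⊗ₘ κ)
        = ∫ y, g y ∂((Measure.pi fun _ : Fin n => ν ⊗ₘ κ).map (Function.eval i)) :=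
          (integral_map (measurable_pi_apply i).aemeasurable hgm.aestronglyMeasurable).symm
      _ = ∫ y, g y ∂(ν ⊗ₘ κ) := by rw [pi_map_eval']
  have hint_i : ∀ i : Fin n, Integrable (fun ω : Fin n → X × Fin K × ℝ => g (ω i))
      (Measure.pi fun _ => ν ⊗ₘ κ) := by
    intro i
    have h1 : Integrable g ((Measure.pi fun _ : Fin n => ν ⊗ₘ κ).map (Function.eval i)) := by
      rw [pi_map_eval']; exact hgint
    exact (integrable_map_measure hgm.aestronglyMeasurable
      (measurable_pi_apply i).aemeasurable).mp h1
  have hpi : (∫ ω : Fin n → X × Fin K × ℝ,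
        (n : ℝ)⁻¹ * ∑ i, (ω i).2.2 * pl (ω i).1 (ω i).2.1 / p0 (ω i).1 (ω i).2.1 ^ α
        ∂(Measure.pi fun _ => ν ⊗ₘ κ))
      = ∫ x, ∑ a, pl x a * c x a * p0 x a ^ (1 - α) ∂ν := by
    have hshape : (∫ ω : Fin n → X × Fin K × ℝ,
          (n : ℝ)⁻¹ * ∑ i, (ω i).2.2 * pl (ω i).1 (ω i).2.1 / p0 (ω i).1 (ω i).2.1 ^ α
          ∂(Measure.pi fun _ => ν ⊗ₘ κ))
        = ∫ ω : Fin n → X × Fin K × ℝ, (n : ℝ)⁻¹ * ∑ i, g (ω i)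
          ∂(Measure.pi fun _ => ν ⊗ₘ κ) := rfl
    rw [hshape, integral_const_mul, integral_finset_sum _ (fun i _ => hint_i i)]
    simp_rw [heval]
    rw [Finset.sum_const, Finset.card_univ, Fintype.card_fin, nsmul_eq_mul, ← mul_assoc,
      inv_mul_cancel₀ (by exact_mod_cast hn.ne' : (n : ℝ) ≠ 0), one_mul,
      Measure.integral_compProd hgint]
    exact integral_congr_ae (ae_of_all _ hkey)
  rw [hpi]
  -- integrability over ν of the three context functions
  have hrmeas : ∀ a : Fin K, Measurable fun x => p0 x a ^ (1 - α) := fun a =>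
    (Real.continuous_rpow_const h1α).measurable.comp (hp0meas a)
  have hFint : Integrable (fun x => ∑ a, pl x a * c x a * p0 x a ^ (1 - α)) ν := by
    refine Integrable.mono' (integrable_const (K : ℝ))
      (Finset.measurable_sum _ fun a _ =>
        ((hplmeas a).mul (hcmeas a)).mul (hrmeas a)).aestronglyMeasurable
      (ae_of_all _ fun x => ?_)
    rw [Real.norm_eq_abs]
    calc |∑ a, pl x a * c x a * p0 x a ^ (1 - α)|
        ≤ ∑ a, |pl x a * c x a * p0 x a ^ (1 - α)| := Finset.abs_sum_le_sum_abs _ _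
      _ ≤ ∑ _a : Fin K, (1 : ℝ) := by
          refine Finset.sum_le_sum fun a _ => ?_
          rw [abs_mul, abs_mul, abs_of_nonneg (hplnn x a), abs_of_nonneg (hrpos x a).le]
          have h1 : pl x a ≤ 1 := by
            rw [← hplsum x]
            exact Finset.single_le_sum (fun b _ => hplnn x b) (Finset.mem_univ a)
          have h2 : |c x a| ≤ 1 := abs_le.2 ⟨(hc x a).1, (hc x a).2.trans zero_le_one⟩
          exact mul_le_one₀ (mul_le_one₀ h1 (abs_nonneg _) h2) (hrpos x a).le (hrle1 x a)
      _ = (K : ℝ) := by simp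
  have hGint : Integrable (fun x => ∑ a, pl x a * c x a) ν := by
    refine Integrable.mono' (integrable_const (K : ℝ))
      (Finset.measurable_sum _ fun a _ =>
        (hplmeas a).mul (hcmeas a)).aestronglyMeasurable
      (ae_of_all _ fun x => ?_)
    rw [Real.norm_eq_abs]
    calc |∑ a, pl x a * c x a| ≤ ∑ a, |pl x a * c x a| := Finset.abs_sum_le_sum_abs _ _
      _ ≤ ∑ _a : Fin K, (1 : ℝ) := by
          refine Finset.sum_le_sum fun a _ => ?_
          rw [abs_mul, abs_of_nonneg (hplnn x a)]
          have h1 : pl x a ≤ 1 := by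
            rw [← hplsum x]
            exact Finset.single_le_sum (fun b _ => hplnn x b) (Finset.mem_univ a)
          have h2 : |c x a| ≤ 1 := abs_le.2 ⟨(hc x a).1, (hc x a).2.trans zero_le_one⟩
          exact mul_le_one₀ h1 (abs_nonneg _) h2
      _ = (K : ℝ) := by simp
  have hHint : Integrable (fun x => ∑ a, pl x a * (1 - p0 x a ^ (1 - α))) ν := by
    refine Integrable.mono' (integrable_const (K : ℝ))
      (Finset.measurable_sum _ fun a _ =>
        (hplmeas a).mul (measurable_const.sub (hrmeas a))).aestronglyMeasurable
      (ae_of_all _ fun x => ?_)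
    rw [Real.norm_eq_abs]
    calc |∑ a, pl x a * (1 - p0 x a ^ (1 - α))|
        ≤ ∑ a, |pl x a * (1 - p0 x a ^ (1 - α))| := Finset.abs_sum_le_sum_abs _ _
      _ ≤ ∑ _a : Fin K, (1 : ℝ) := by
          refine Finset.sum_le_sum fun a _ => ?_
          rw [abs_mul, abs_of_nonneg (hplnn x a),
            abs_of_nonneg (by linarith [hrle1 x a] : (0:ℝ) ≤ 1 - p0 x a ^ (1 - α))]
          have h1 : pl x a ≤ 1 := by
            rw [← hplsum x]
            exact Finset.single_le_sum (fun b _ => hplnn x b) (Finset.mem_univ a)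
          exact mul_le_one₀ h1 (by linarith [hrle1 x a]) (by linarith [hrpos x a])
      _ = (K : ℝ) := by simp
  rw [← integral_sub hFint hGint]
  calc |∫ x, (∑ a, pl x a * c x a * p0 x a ^ (1 - α)) - ∑ a, pl x a * c x a ∂ν|
      ≤ ∫ x, |(∑ a, pl x a * c x a * p0 x a ^ (1 - α)) - ∑ a, pl x a * c x a| ∂ν := by
        simpa only [Real.norm_eq_abs] using
          norm_integral_le_integral_norm (μ := ν)
            (fun x => (∑ a, pl x a * c x a * p0 x a ^ (1 - α)) - ∑ a, pl x a * c x a)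
    _ ≤ ∫ x, ∑ a, pl x a * (1 - p0 x a ^ (1 - α)) ∂ν := by
        refine integral_mono (hFint.sub hGint).abs hHint fun x => ?_
        rw [← Finset.sum_sub_distrib]
        calc |∑ a, (pl x a * c x a * p0 x a ^ (1 - α) - pl x a * c x a)|
            ≤ ∑ a, |pl x a * c x a * p0 x a ^ (1 - α) - pl x a * c x a| :=
              Finset.abs_sum_le_sum_abs _ _
          _ ≤ ∑ a, pl x a * (1 - p0 x a ^ (1 - α)) := by
              refine Finset.sum_le_sum fun a _ => ?_
              have h1 : pl x a * c x a * p0 x a ^ (1 - α) - pl x a * c x a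
                  = pl x a * (-c x a) * (1 - p0 x a ^ (1 - α)) := by ring
              rw [h1, abs_of_nonneg (mul_nonneg
                (mul_nonneg (hplnn x a) (by linarith [(hc x a).2]))
                (by linarith [hrle1 x a]))]
              refine mul_le_mul_of_nonneg_right ?_ (by linarith [hrle1 x a])
              calc pl x a * (-c x a) ≤ pl x a * 1 :=
                    mul_le_mul_of_nonneg_left (by linarith [(hc x a).1]) (hplnn x a)
                _ = pl x a := mul_one _
end

section
/- Let α ∈ [0,1]. For every policy π, the variance of the IPS-α estimator satisfies V[R̂_n^α(π)] ≤ (1/n) E_{x∼ν, a∼π(·|x)}[π(a|x)/π0(a|x)^{2α−1}]. -/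
open MeasureTheory ProbabilityTheory Real

section AuxPi

variable {E : Type*} [MeasurableSpace E] {μ : Measure E} [IsProbabilityMeasure μ] {n : ℕ}

private lemma aux_prod_single (a : Fin n → ℝ) (i : Fin n) :
    (∏ j, if j = i then a j else (1 : ℝ)) = a i := by
  rw [Finset.prod_ite_eq' Finset.univ i a, if_pos (Finset.mem_univ i)]

private lemma aux_prod_pair (a b : Fin n → ℝ) {i j : Fin n} (hij : i ≠ j) :
    (∏ k, if k = i then a k else if k = j then b k else (1 : ℝ)) = a i * b j := by
  classical
  rw [← Finset.prod_mul_prod_compl ({i, j} : Finset (Fin n))]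
  have h1 : (∏ k ∈ ({i, j} : Finset (Fin n)),
      if k = i then a k else if k = j then b k else (1 : ℝ)) = a i * b j := by
    rw [Finset.prod_pair hij]
    simp [Ne.symm hij]
  have h2 : (∏ k ∈ (({i, j} : Finset (Fin n)))ᶜ,
      if k = i then a k else if k = j then b k else (1 : ℝ)) = 1 := by
    refine Finset.prod_eq_one fun k hk => ?_
    simp only [Finset.mem_compl, Finset.mem_insert, Finset.mem_singleton, not_or] at hk
    simp [hk.1, hk.2]
  rw [h1, h2, mul_one]

private lemma aux_integrable_eval (F : E → ℝ) (hF : Integrable F μ) (i : Fin n) :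
    Integrable (fun x : Fin n → E => F (x i)) (Measure.pi fun _ => μ) := by
  letI : MeasureSpace E := { toMeasurableSpace := ‹_›, volume := μ }
  haveI : IsProbabilityMeasure (volume : Measure E) := by exact ‹IsProbabilityMeasure μ›
  have hfun : (fun x : Fin n → E => F (x i))
      = fun x : Fin n → E => ∏ j, (fun j (y : E) => if j = i then F y else (1 : ℝ)) j (x j) := by
    funext x
    exact (aux_prod_single (fun j => F (x j)) i).symm
  rw [hfun]
  exact Integrable.fintype_prod (𝕜 := ℝ) (f := fun j (y : E) => if j = i then F y else 1)
    (fun j => by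
      by_cases hj : j = i
      · simp only [hj, if_true]
        exact hF
      · simp only [hj, if_false]
        exact integrable_const (1 : ℝ))

private lemma aux_integral_eval (F : E → ℝ) (i : Fin n) :
    ∫ x : Fin n → E, F (x i) ∂(Measure.pi fun _ => μ) = ∫ y, F y ∂μ := by
  letI : MeasureSpace E := { toMeasurableSpace := ‹_›, volume := μ }
  haveI : IsProbabilityMeasure (volume : Measure E) := by exact ‹IsProbabilityMeasure μ›
  calc ∫ x : Fin n → E, F (x i) ∂(Measure.pi fun _ => μ)
      = ∫ x : Fin n → E, ∏ j, (fun j (y : E) => if j = i then F y else (1 : ℝ)) j (x j)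
          ∂(Measure.pi fun _ => μ) := by
        congr 1
        funext x
        exact (aux_prod_single (fun j => F (x j)) i).symm
    _ = ∏ j, ∫ y, (fun j (y : E) => if j = i then F y else (1 : ℝ)) j y ∂μ := by
        exact integral_fintype_prod_eq_prod (ι := Fin n) (E := fun _ => E)
          (fun j (y : E) => if j = i then F y else (1 : ℝ))
    _ = ∫ y, F y ∂μ := by
        have h2 : ∀ j : Fin n, (∫ y, (if j = i then F y else (1 : ℝ)) ∂μ)
            = if j = i then (∫ y, F y ∂μ) else 1 := by
          intro j; split_ifs with h
          · rfl
          · simp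
        simp only [h2]
        exact aux_prod_single (fun _ => ∫ y, F y ∂μ) i

private lemma aux_integrable_pair (F G : E → ℝ) (hF : Integrable F μ) (hG : Integrable G μ)
    {i j : Fin n} (hij : i ≠ j) :
    Integrable (fun x : Fin n → E => F (x i) * G (x j)) (Measure.pi fun _ => μ) := by
  letI : MeasureSpace E := { toMeasurableSpace := ‹_›, volume := μ }
  haveI : IsProbabilityMeasure (volume : Measure E) := by exact ‹IsProbabilityMeasure μ›
  have hfun : (fun x : Fin n → E => F (x i) * G (x j))
      = fun x : Fin n → E =>
          ∏ k, (fun k (y : E) => if k = i then F y else if k = j then G y else (1 : ℝ)) k (x k) := by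
    funext x
    exact (aux_prod_pair (fun k => F (x k)) (fun k => G (x k)) hij).symm
  rw [hfun]
  exact Integrable.fintype_prod (𝕜 := ℝ)
    (f := fun k (y : E) => if k = i then F y else if k = j then G y else 1)
    (fun k => by
      rcases eq_or_ne k i with rfl | hki
      · simp only [if_pos rfl]
        exact hF
      · rcases eq_or_ne k j with rfl | hkj
        · simp only [hki, if_false, if_pos rfl]
          exact hG
        · simp only [hki, hkj, if_false]
          exact integrable_const (1 : ℝ))

private lemma aux_integral_pair (F G : E → ℝ) {i j : Fin n} (hij : i ≠ j) :
    ∫ x : Fin n → E, F (x i) * G (x j) ∂(Measure.pi fun _ => μ)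
      = (∫ y, F y ∂μ) * ∫ y, G y ∂μ := by
  letI : MeasureSpace E := { toMeasurableSpace := ‹_›, volume := μ }
  haveI : IsProbabilityMeasure (volume : Measure E) := by exact ‹IsProbabilityMeasure μ›
  calc ∫ x : Fin n → E, F (x i) * G (x j) ∂(Measure.pi fun _ => μ)
      = ∫ x : Fin n → E,
          ∏ k, (fun k (y : E) => if k = i then F y else if k = j then G y else (1 : ℝ)) k (x k)
          ∂(Measure.pi fun _ => μ) := by
        congr 1
        funext x
        exact (aux_prod_pair (fun k => F (x k)) (fun k => G (x k)) hij).symm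
    _ = ∏ k, ∫ y, (fun k (y : E) => if k = i then F y else if k = j then G y else (1 : ℝ)) k y ∂μ := by
        exact integral_fintype_prod_eq_prod (ι := Fin n) (E := fun _ => E)
          (fun k (y : E) => if k = i then F y else if k = j then G y else (1 : ℝ))
    _ = (∫ y, F y ∂μ) * ∫ y, G y ∂μ := by
        have h2 : ∀ k : Fin n, (∫ y, (if k = i then F y else if k = j then G y else (1 : ℝ)) ∂μ)
            = if k = i then (∫ y, F y ∂μ) else if k = j then (∫ y, G y ∂μ) else 1 := by
          intro k; split_ifs with h1 h2 <;> simp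
        simp only [h2]
        exact aux_prod_pair (fun _ => ∫ y, F y ∂μ) (fun _ => ∫ y, G y ∂μ) hij

private lemma main_aux {Ω : Type*} [MeasurableSpace Ω] (μ : Measure Ω) [IsProbabilityMeasure μ]
    (g : Ω → ℝ) (hg : AEStronglyMeasurable g μ)
    (hg2 : Integrable (fun ω => g ω ^ 2) μ) (n : ℕ) (hn : 0 < n) :
    (∫ x : Fin n → Ω, ((n : ℝ)⁻¹ * ∑ i, g (x i)
        - ∫ x' : Fin n → Ω, (n : ℝ)⁻¹ * ∑ i, g (x' i) ∂(Measure.pi fun _ => μ)) ^ 2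
        ∂(Measure.pi fun _ => μ))
      ≤ (n : ℝ)⁻¹ * ∫ ω, g ω ^ 2 ∂μ := by
  have hnne : (n : ℝ) ≠ 0 := Nat.cast_ne_zero.mpr hn.ne'
  have hg1 : Integrable g μ := ((memLp_two_iff_integrable_sq hg).mpr hg2).integrable one_le_two
  set m : ℝ := ∫ ω, g ω ∂μ with hm
  set Y : Ω → ℝ := fun ω => g ω - m with hY
  have hY1 : Integrable Y μ := hg1.sub (integrable_const m)
  have hYm : ∫ ω, Y ω ∂μ = 0 := by
    rw [hY, integral_sub hg1 (integrable_const m)]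
    simp [hm]
  have hYsq : (fun ω => Y ω * Y ω) = fun ω => g ω ^ 2 - 2 * m * g ω + m ^ 2 := by
    funext ω; simp only [hY]; ring
  have hY2 : Integrable (fun ω => Y ω * Y ω) μ := by
    rw [hYsq]
    exact (hg2.sub (hg1.const_mul (2 * m))).add (integrable_const (m ^ 2))
  have hia : Integrable (fun ω => 2 * m * g ω) μ := hg1.const_mul (2 * m)
  have hib : Integrable (fun ω => g ω ^ 2 - 2 * m * g ω) μ := hg2.sub hia
  have hV : ∫ ω, Y ω * Y ω ∂μ ≤ ∫ ω, g ω ^ 2 ∂μ := by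
    rw [hYsq, integral_add hib (integrable_const (m ^ 2)),
      integral_sub hg2 hia, integral_const_mul, integral_const,
      probReal_univ, one_smul, ← hm]
    nlinarith [sq_nonneg m]
  have hM : (∫ x' : Fin n → Ω, (n : ℝ)⁻¹ * ∑ i, g (x' i) ∂(Measure.pi fun _ => μ)) = m := by
    rw [integral_const_mul, integral_finset_sum _ fun i _ => aux_integrable_eval g hg1 i]
    simp only [aux_integral_eval g]
    rw [Finset.sum_const, Finset.card_univ, Fintype.card_fin, nsmul_eq_mul, ← hm]
    field_simp
  rw [hM]
  have hint : ∀ i j : Fin n,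
      Integrable (fun x : Fin n → Ω => Y (x i) * Y (x j)) (Measure.pi fun _ => μ) := by
    intro i j
    rcases eq_or_ne i j with rfl | hij
    · exact aux_integrable_eval (fun ω => Y ω * Y ω) hY2 i
    · exact aux_integrable_pair Y Y hY1 hY1 hij
  calc (∫ x : Fin n → Ω, ((n : ℝ)⁻¹ * ∑ i, g (x i) - m) ^ 2 ∂(Measure.pi fun _ => μ))
      = ∫ x : Fin n → Ω, (n : ℝ)⁻¹ ^ 2 * ∑ i, ∑ j, Y (x i) * Y (x j)
          ∂(Measure.pi fun _ => μ) := by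
        congr 1
        funext x
        have h1 : (n : ℝ)⁻¹ * ∑ i, g (x i) - m = (n : ℝ)⁻¹ * ∑ i, Y (x i) := by
          simp only [hY, Finset.sum_sub_distrib, Finset.sum_const, Finset.card_univ,
            Fintype.card_fin, nsmul_eq_mul]
          field_simp
        rw [h1, mul_pow, pow_two (∑ i, Y (x i)), Finset.sum_mul_sum]
    _ = (n : ℝ)⁻¹ ^ 2 * ∑ i, ∑ j, ∫ x : Fin n → Ω, Y (x i) * Y (x j)
          ∂(Measure.pi fun _ => μ) := by
        rw [integral_const_mul,
          integral_finset_sum _ fun i _ => integrable_finset_sum _ fun j _ => hint i j]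
        congr 1
        exact Finset.sum_congr rfl fun i _ => integral_finset_sum _ fun j _ => hint i j
    _ = (n : ℝ)⁻¹ ^ 2 * ∑ _i : Fin n, ∫ ω, Y ω * Y ω ∂μ := by
        congr 1
        refine Finset.sum_congr rfl fun i _ => ?_
        refine (Finset.sum_eq_single i (fun j _ hji => ?_) (fun h => ?_)).trans ?_
        · rw [aux_integral_pair Y Y (Ne.symm hji), hYm, zero_mul]
        · exact absurd (Finset.mem_univ i) h
        · exact aux_integral_eval (fun ω => Y ω * Y ω) i
    _ = (n : ℝ)⁻¹ * ∫ ω, Y ω * Y ω ∂μ := by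
        rw [Finset.sum_const, Finset.card_univ, Fintype.card_fin, nsmul_eq_mul]
        field_simp
    _ ≤ (n : ℝ)⁻¹ * ∫ ω, g ω ^ 2 ∂μ := by
        apply mul_le_mul_of_nonneg_left hV
        positivity

end AuxPi

/-- **Variance of the IPS-α estimator.**  Off-policy contextual bandit setting with finite
action set `Fin K`, context distribution `ν`, logging policy `p0`, expected-cost function `c`
taking values in `[-1, 0]`, and a Markov kernel `κ` describing the joint distribution of the
taken action and the observed stochastic cost given a context (action marginal `p0`, cost
supported in `[-1, 0]` with conditional mean `c`).  The logged data consists of `n` i.i.d.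
draws from `ν ⊗ₘ κ`.  For `α ∈ [0,1]`, the variance of the IPS-α estimator of the risk of a
policy `pl` satisfies `V[R̂ₙ^α(pl)] ≤ (1/n) E_{x∼ν, a∼pl(·|x)}[pl(a|x)/p0(a|x)^(2α−1)]`. -/
theorem ips_alpha_variance_bound
    {X : Type*} [MeasurableSpace X] {K : ℕ}
    (ν : Measure X) [IsProbabilityMeasure ν]
    (p0 pl c : X → Fin K → ℝ)
    (hp0meas : ∀ a, Measurable fun x => p0 x a)
    (hplmeas : ∀ a, Measurable fun x => pl x a)
    (hcmeas : ∀ a, Measurable fun x => c x a)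
    (hp0pos : ∀ x a, 0 < p0 x a) (hp0sum : ∀ x, ∑ a, p0 x a = 1)
    (hplnn : ∀ x a, 0 ≤ pl x a) (hplsum : ∀ x, ∑ a, pl x a = 1)
    (hc : ∀ x a, c x a ∈ Set.Icc (-1 : ℝ) 0)
    (κ : Kernel X (Fin K × ℝ)) [IsMarkovKernel κ]
    (hκact : ∀ x a, κ x {p | p.1 = a} = ENNReal.ofReal (p0 x a))
    (hκsupp : ∀ x, ∀ᵐ p ∂(κ x), p.2 ∈ Set.Icc (-1 : ℝ) 0)
    (hκmean : ∀ x a, ∫ p in {p : Fin K × ℝ | p.1 = a}, p.2 ∂(κ x) = p0 x a * c x a)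
    (n : ℕ) (hn : 0 < n) (α : ℝ) (hα : α ∈ Set.Icc (0 : ℝ) 1)
    (hInt : Integrable (fun x => ∑ a, pl x a * (pl x a / p0 x a ^ (2 * α - 1))) ν) :
    (∫ ω : Fin n → X × Fin K × ℝ,
        ((n : ℝ)⁻¹ * ∑ i, (ω i).2.2 * pl (ω i).1 (ω i).2.1 / p0 (ω i).1 (ω i).2.1 ^ α
          - ∫ ω' : Fin n → X × Fin K × ℝ,
              (n : ℝ)⁻¹ * ∑ i, (ω' i).2.2 * pl (ω' i).1 (ω' i).2.1 / p0 (ω' i).1 (ω' i).2.1 ^ α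
              ∂(Measure.pi fun _ => ν ⊗ₘ κ)) ^ 2
        ∂(Measure.pi fun _ => ν ⊗ₘ κ))
      ≤ (n : ℝ)⁻¹ * ∫ x, ∑ a, pl x a * (pl x a / p0 x a ^ (2 * α - 1)) ∂ν := by
  classical
  set g : X × Fin K × ℝ → ℝ := fun ω => ω.2.2 * pl ω.1 ω.2.1 / p0 ω.1 ω.2.1 ^ α with hgdef
  set B : X → ℝ := fun x => ∑ a, pl x a * (pl x a / p0 x a ^ (2 * α - 1)) with hBdef
  have hBnn : ∀ x, 0 ≤ B x := fun x => Finset.sum_nonneg fun a _ =>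
    mul_nonneg (hplnn x a) (div_nonneg (hplnn x a) (Real.rpow_nonneg (hp0pos x a).le _))
  have hpow : ∀ b : Fin K, Measurable fun x => p0 x b ^ α := by
    intro b
    have h : (fun x => p0 x b ^ α) = fun x => Real.exp (Real.log (p0 x b) * α) :=
      funext fun x => Real.rpow_def_of_pos (hp0pos x b) α
    rw [h]
    exact Real.measurable_exp.comp ((Real.measurable_log.comp (hp0meas b)).mul_const α)
  have hφm : ∀ b : Fin K, Measurable fun x => pl x b / p0 x b ^ α :=
    fun b => (hplmeas b).div (hpow b)
  have hsum : Measurable fun ω : X × Fin K × ℝ => pl ω.1 ω.2.1 / p0 ω.1 ω.2.1 ^ α := by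
    have hrew : (fun ω : X × Fin K × ℝ => pl ω.1 ω.2.1 / p0 ω.1 ω.2.1 ^ α)
        = fun ω : X × Fin K × ℝ => ∑ b, if ω.2.1 = b then pl ω.1 b / p0 ω.1 b ^ α else 0 := by
      funext ω
      rw [Finset.sum_ite_eq Finset.univ ω.2.1 fun b => pl ω.1 b / p0 ω.1 b ^ α,
        if_pos (Finset.mem_univ _)]
    rw [hrew]
    refine Finset.measurable_sum _ fun b _ => ?_
    refine Measurable.ite ?_ ((hφm b).comp measurable_fst) measurable_const
    exact (measurable_fst.comp measurable_snd) (measurableSet_singleton b)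
  have hgm : Measurable g := by
    rw [hgdef]
    have h : (fun ω : X × Fin K × ℝ => ω.2.2 * pl ω.1 ω.2.1 / p0 ω.1 ω.2.1 ^ α)
        = fun ω : X × Fin K × ℝ => ω.2.2 * (pl ω.1 ω.2.1 / p0 ω.1 ω.2.1 ^ α) :=
      funext fun ω => mul_div_assoc _ _ _
    rw [h]
    exact measurable_snd.snd.mul hsum
  have hkey : ∀ x, (∫⁻ p, ((‖g (x, p)‖₊ : ENNReal)) ^ 2 ∂(κ x)) ≤ ENNReal.ofReal (B x) := by
    intro x
    have hφnn : ∀ a : Fin K, 0 ≤ pl x a / p0 x a ^ α := fun a =>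
      div_nonneg (hplnn x a) (Real.rpow_nonneg (hp0pos x a).le α)
    calc ∫⁻ p, ((‖g (x, p)‖₊ : ENNReal)) ^ 2 ∂(κ x)
        ≤ ∫⁻ p, ENNReal.ofReal ((pl x p.1 / p0 x p.1 ^ α) ^ 2) ∂(κ x) := by
          refine lintegral_mono_ae ?_
          filter_upwards [hκsupp x] with p hp
          have h2 : |p.2| ≤ 1 := abs_le.mpr ⟨hp.1, by linarith [hp.2]⟩
          have habs : |g (x, p)| ≤ pl x p.1 / p0 x p.1 ^ α := by
            have hgp : g (x, p) = p.2 * (pl x p.1 / p0 x p.1 ^ α) := mul_div_assoc _ _ _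
            rw [hgp, abs_mul, abs_of_nonneg (hφnn p.1)]
            exact mul_le_of_le_one_left (hφnn p.1) h2
          calc ((‖g (x, p)‖₊ : ENNReal)) ^ 2
              = ENNReal.ofReal |g (x, p)| ^ 2 := by rw [← enorm_eq_nnnorm, Real.enorm_eq_ofReal_abs]
            _ ≤ ENNReal.ofReal (pl x p.1 / p0 x p.1 ^ α) ^ 2 :=
                pow_le_pow_left' (ENNReal.ofReal_le_ofReal habs) 2
            _ = ENNReal.ofReal ((pl x p.1 / p0 x p.1 ^ α) ^ 2) :=
                (ENNReal.ofReal_pow (hφnn p.1) 2).symm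
      _ = ∑ a, ENNReal.ofReal ((pl x a / p0 x a ^ α) ^ 2) * κ x {p : Fin K × ℝ | p.1 = a} := by
          have hrw : (fun p : Fin K × ℝ => ENNReal.ofReal ((pl x p.1 / p0 x p.1 ^ α) ^ 2))
              = fun p => ∑ a, Set.indicator {q : Fin K × ℝ | q.1 = a}
                  (fun _ => ENNReal.ofReal ((pl x a / p0 x a ^ α) ^ 2)) p := by
            funext p
            have hind : ∀ a : Fin K, Set.indicator {q : Fin K × ℝ | q.1 = a}
                (fun _ => ENNReal.ofReal ((pl x a / p0 x a ^ α) ^ 2)) p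
                = if p.1 = a then ENNReal.ofReal ((pl x a / p0 x a ^ α) ^ 2) else 0 := fun a => by
              simp [Set.indicator_apply, Set.mem_setOf_eq]
            simp only [hind]
            rw [Finset.sum_ite_eq Finset.univ p.1
              (fun a => ENNReal.ofReal ((pl x a / p0 x a ^ α) ^ 2)), if_pos (Finset.mem_univ _)]
          rw [hrw, lintegral_finset_sum]
          · refine Finset.sum_congr rfl fun a _ => ?_
            exact lintegral_indicator_const (measurable_fst (measurableSet_singleton a)) _
          · exact fun a _ =>
              Measurable.indicator measurable_const (measurable_fst (measurableSet_singleton a))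
      _ = ENNReal.ofReal (∑ a, (pl x a / p0 x a ^ α) ^ 2 * p0 x a) := by
          have hterm : ∀ a ∈ Finset.univ,
              ENNReal.ofReal ((pl x a / p0 x a ^ α) ^ 2) * κ x {p : Fin K × ℝ | p.1 = a}
                = ENNReal.ofReal ((pl x a / p0 x a ^ α) ^ 2 * p0 x a) := fun a _ => by
            rw [hκact x a, ← ENNReal.ofReal_mul (sq_nonneg _)]
          rw [Finset.sum_congr rfl hterm]
          exact (ENNReal.ofReal_sum_of_nonneg
            fun a _ => mul_nonneg (sq_nonneg _) (hp0pos x a).le).symm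
      _ = ENNReal.ofReal (B x) := by
          rw [hBdef]
          congr 1
          refine Finset.sum_congr rfl fun a _ => ?_
          have hpa : (0 : ℝ) < p0 x a := hp0pos x a
          have h1 : (p0 x a ^ α) ^ (2 : ℕ) = p0 x a ^ (2 * α) := by
            rw [← Real.rpow_natCast (p0 x a ^ α) 2, ← Real.rpow_mul hpa.le]
            norm_num [mul_comm]
          have h2 : p0 x a ^ (2 * α) = p0 x a ^ (2 * α - 1) * p0 x a := by
            nth_rewrite 1 [show 2 * α = (2 * α - 1) + 1 by ring]
            rw [Real.rpow_add_one hpa.ne']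
          have h3 : (0 : ℝ) < p0 x a ^ (2 * α - 1) := Real.rpow_pos_of_pos hpa _
          rw [div_pow, h1, h2]
          field_simp
  have hfin : (∫⁻ ω, (‖g ω‖₊ : ENNReal) ^ 2 ∂(ν ⊗ₘ κ)) ≤ ENNReal.ofReal (∫ x, B x ∂ν) := by
    rw [Measure.lintegral_compProd (hgm.nnnorm.coe_nnreal_ennreal.pow_const 2)]
    calc ∫⁻ x, ∫⁻ p, (‖g (x, p)‖₊ : ENNReal) ^ 2 ∂(κ x) ∂ν
        ≤ ∫⁻ x, ENNReal.ofReal (B x) ∂ν := lintegral_mono hkey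
      _ = ENNReal.ofReal (∫ x, B x ∂ν) :=
          (ofReal_integral_eq_lintegral_ofReal hInt (ae_of_all _ hBnn)).symm
  have hg2 : Integrable (fun ω => g ω ^ 2) (ν ⊗ₘ κ) := by
    refine ⟨(hgm.pow_const 2).aestronglyMeasurable, ?_⟩
    have h : (fun ω : X × Fin K × ℝ => (‖g ω ^ 2‖₊ : ENNReal))
        = fun ω => (‖g ω‖₊ : ENNReal) ^ 2 :=
      funext fun ω => by rw [← ENNReal.coe_pow, nnnorm_pow]
    show (∫⁻ ω, (‖g ω ^ 2‖₊ : ENNReal) ∂(ν ⊗ₘ κ)) < ⊤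
    rw [h]
    exact lt_of_le_of_lt hfin ENNReal.ofReal_lt_top
  have hfb : ∫ ω, g ω ^ 2 ∂(ν ⊗ₘ κ) ≤ ∫ x, B x ∂ν := by
    rw [integral_eq_lintegral_of_nonneg_ae (ae_of_all _ fun ω => sq_nonneg (g ω))
      (hgm.pow_const 2).aestronglyMeasurable]
    have heq : (fun ω : X × Fin K × ℝ => ENNReal.ofReal (g ω ^ 2))
        = fun ω => (‖g ω‖₊ : ENNReal) ^ 2 := funext fun ω => by
      rw [← enorm_eq_nnnorm, Real.enorm_eq_ofReal_abs, ← ENNReal.ofReal_pow (abs_nonneg _), sq_abs]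
    rw [heq]
    exact ENNReal.toReal_le_of_le_ofReal (integral_nonneg hBnn) hfin
  show (∫ ω : Fin n → X × Fin K × ℝ,
        ((n : ℝ)⁻¹ * ∑ i, g (ω i)
          - ∫ ω' : Fin n → X × Fin K × ℝ, (n : ℝ)⁻¹ * ∑ i, g (ω' i)
              ∂(Measure.pi fun _ => ν ⊗ₘ κ)) ^ 2
        ∂(Measure.pi fun _ => ν ⊗ₘ κ))
      ≤ (n : ℝ)⁻¹ * ∫ x, B x ∂ν
  exact le_trans (main_aux (ν ⊗ₘ κ) g hgm.aestronglyMeasurable hg2 n hn)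
    (mul_le_mul_of_nonneg_left hfb (inv_nonneg.mpr (Nat.cast_nonneg n)))
end

section
/- Let β ∈ [0,1]. For every policy π, the bias of the IPS-β estimator satisfies |B(R̃_n^β(π))| ≤ E_{x∼ν, a∼π(·|x)}[ |(π0(a|x)/π(a|x))^{1−β} − 1| ] (the expectation over a ∼ π(·|x) only involves actions with π(a|x) > 0). -/
open MeasureTheory ProbabilityTheory Real

section AuxLemmas

lemma aux_w_eq {p0 pl β : ℝ} (hp0 : 0 < p0) (hpl : 0 ≤ pl) :
    (pl / p0) ^ β * p0 = pl ^ β * p0 ^ (1 - β) := by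
  rw [Real.div_rpow hpl hp0.le, Real.rpow_sub hp0, Real.rpow_one]
  field_simp

lemma aux_w_nonneg {p0 pl β : ℝ} (hp0 : 0 < p0) (hpl : 0 ≤ pl) :
    0 ≤ (pl / p0) ^ β * p0 :=
  mul_nonneg (Real.rpow_nonneg (div_nonneg hpl hp0.le) _) hp0.le

lemma aux_w_le {p0 pl β : ℝ} (hp0 : 0 < p0) (hpl : 0 ≤ pl) (hβ0 : 0 ≤ β) (hβ1 : β ≤ 1) :
    (pl / p0) ^ β * p0 ≤ β * pl + (1 - β) * p0 := by
  rw [aux_w_eq hp0 hpl]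
  exact Real.geom_mean_le_arith_mean2_weighted hβ0 (by linarith) hpl hp0.le (by ring)

lemma aux_term_eq {p0 pl β : ℝ} (hp0 : 0 < p0) (hpl : 0 < pl) :
    pl * |(p0 / pl) ^ (1 - β) - 1| = |(pl / p0) ^ β * p0 - pl| := by
  have h2 : pl ^ β * pl ^ (1 - β) = pl := by
    rw [← Real.rpow_add hpl]; norm_num
  have hplb : (0 : ℝ) < pl ^ (1 - β) := Real.rpow_pos_of_pos hpl _
  have h1 : pl * (p0 / pl) ^ (1 - β) = (pl / p0) ^ β * p0 := by
    rw [aux_w_eq hp0 hpl.le, Real.div_rpow hp0.le hpl.le, ← mul_div_assoc,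
      div_eq_iff hplb.ne']
    linear_combination (-p0 ^ (1 - β)) * h2
  have habs : pl * |(p0 / pl) ^ (1 - β) - 1| = |pl * ((p0 / pl) ^ (1 - β) - 1)| := by
    rw [abs_mul, abs_of_pos hpl]
  rw [habs, mul_sub, mul_one, h1]

lemma aux_term_le {p0 pl β : ℝ} (hp0 : 0 < p0) (hpl : 0 ≤ pl) (hβ0 : 0 ≤ β) (hβ1 : β ≤ 1) :
    pl * |(p0 / pl) ^ (1 - β) - 1| ≤ β * pl + (1 - β) * p0 + pl := by
  rcases eq_or_lt_of_le hpl with h | h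
  · rw [← h, zero_mul]
    nlinarith
  · rw [aux_term_eq hp0 h]
    have h1 := aux_w_le hp0 hpl hβ0 hβ1
    have h2 := aux_w_nonneg (β := β) hp0 hpl
    have h3 : |(pl / p0) ^ β * p0 - pl| ≤ |(pl / p0) ^ β * p0| + |pl| := abs_sub _ _
    rw [abs_of_nonneg h2, abs_of_nonneg hpl] at h3
    linarith

lemma aux_sum_le_one {K : ℕ} (p0 pl : Fin K → ℝ) (hp0 : ∀ a, 0 < p0 a)
    (hp0s : ∑ a, p0 a = 1) (hpl : ∀ a, 0 ≤ pl a) (hpls : ∑ a, pl a = 1)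
    {β : ℝ} (hβ0 : 0 ≤ β) (hβ1 : β ≤ 1) :
    ∑ a, (pl a / p0 a) ^ β * p0 a ≤ 1 := by
  calc ∑ a, (pl a / p0 a) ^ β * p0 a
      ≤ ∑ a, (β * pl a + (1 - β) * p0 a) :=
        Finset.sum_le_sum fun a _ => aux_w_le (hp0 a) (hpl a) hβ0 hβ1
    _ = 1 := by
        rw [Finset.sum_add_distrib, ← Finset.mul_sum, ← Finset.mul_sum, hpls, hp0s]; ring

lemma aux_pointwise {K : ℕ} (p0 pl c : Fin K → ℝ)
    (hp0 : ∀ a, 0 < p0 a) (hp0s : ∑ a, p0 a = 1)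
    (hpl : ∀ a, 0 ≤ pl a) (hpls : ∑ a, pl a = 1)
    (hc : ∀ a, c a ∈ Set.Icc (-1 : ℝ) 0) {β : ℝ} (hβ0 : 0 ≤ β) (hβ1 : β ≤ 1) :
    |∑ a, (pl a / p0 a) ^ β * (p0 a * c a) - ∑ a, pl a * c a|
      ≤ ∑ a, pl a * |(p0 a / pl a) ^ (1 - β) - 1| := by
  classical
  set w : Fin K → ℝ := fun a => (pl a / p0 a) ^ β * p0 a with hw
  set S : Finset (Fin K) := Finset.univ.filter fun a => pl a ≠ 0 with hS
  have hwsum : ∑ a, w a ≤ 1 := aux_sum_le_one p0 pl hp0 hp0s hpl hpls hβ0 hβ1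
  have hcabs : ∀ a, |c a| ≤ 1 := fun a =>
    abs_le.mpr ⟨(hc a).1, (hc a).2.trans zero_le_one⟩
  have hRHS : ∑ a, pl a * |(p0 a / pl a) ^ (1 - β) - 1| = ∑ a ∈ S, |w a - pl a| := by
    rw [← Finset.sum_subset (Finset.subset_univ S)
      (fun a _ ha => by
        have : pl a = 0 := by
          by_contra h
          exact ha (Finset.mem_filter.mpr ⟨Finset.mem_univ a, h⟩)
        rw [this, zero_mul])]
    exact Finset.sum_congr rfl fun a ha => by
      exact aux_term_eq (hp0 a) ((hpl a).lt_of_ne' (Finset.mem_filter.mp ha).2)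
  have hD : ∑ a, (pl a / p0 a) ^ β * (p0 a * c a) - ∑ a, pl a * c a
      = ∑ a, (w a - pl a) * c a := by
    rw [← Finset.sum_sub_distrib]
    exact Finset.sum_congr rfl fun a _ => by rw [hw]; ring
  rw [hD, hRHS, abs_le]
  have hsplit : ∀ g : Fin K → ℝ,
      ∑ a ∈ S, g a + ∑ a ∈ Finset.univ.filter (fun a => ¬ pl a ≠ 0), g a = ∑ a, g a :=
    fun g => Finset.sum_filter_add_sum_filter_not Finset.univ _ g
  constructor
  · -- lower bound : -(∑_S |w-pl|) ≤ ∑ (w-pl) c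
    have h3 : ∑ a, (pl a - w a) * (c a + 1)
        = ∑ a, (pl a - w a) * c a + (1 - ∑ a, w a) := by
      simp only [mul_add, mul_one, sub_mul, Finset.sum_add_distrib, Finset.sum_sub_distrib, hpls]
    have e2 : ∑ a, (pl a - w a) * (c a + 1) ≤ ∑ a ∈ S, |w a - pl a| := by
      rw [← hsplit fun a => (pl a - w a) * (c a + 1)]
      have t1 : ∑ a ∈ S, (pl a - w a) * (c a + 1) ≤ ∑ a ∈ S, |w a - pl a| := by
        refine Finset.sum_le_sum fun a _ => ?_
        have hc1 : 0 ≤ c a + 1 := by linarith [(hc a).1]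
        have hc2 : c a + 1 ≤ 1 := by linarith [(hc a).2]
        calc (pl a - w a) * (c a + 1) ≤ |pl a - w a| * (c a + 1) := by
              exact mul_le_mul_of_nonneg_right (le_abs_self _) hc1
          _ ≤ |pl a - w a| * 1 := mul_le_mul_of_nonneg_left hc2 (abs_nonneg _)
          _ = |w a - pl a| := by rw [mul_one, abs_sub_comm]
      have t2 : ∑ a ∈ Finset.univ.filter (fun a => ¬ pl a ≠ 0), (pl a - w a) * (c a + 1) ≤ 0 := by
        refine Finset.sum_nonpos fun a ha => ?_
        have hpla : pl a = 0 := not_not.mp (Finset.mem_filter.mp ha).2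
        have hwnn : 0 ≤ w a := aux_w_nonneg (hp0 a) (hpl a)
        have hc1 : 0 ≤ c a + 1 := by linarith [(hc a).1]
        rw [hpla, zero_sub]
        exact mul_nonpos_of_nonpos_of_nonneg (by linarith) hc1
      linarith
    have e3 : ∑ a, (pl a - w a) * c a ≤ ∑ a ∈ S, |w a - pl a| := by linarith
    have e4 : ∑ a, (pl a - w a) * c a = -∑ a, (w a - pl a) * c a := by
      rw [← Finset.sum_neg_distrib]
      exact Finset.sum_congr rfl fun a _ => by ring
    linarith
  · -- upper bound
    rw [← hsplit fun a => (w a - pl a) * c a]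
    have t1 : ∑ a ∈ S, (w a - pl a) * c a ≤ ∑ a ∈ S, |w a - pl a| := by
      refine Finset.sum_le_sum fun a _ => ?_
      calc (w a - pl a) * c a ≤ |(w a - pl a) * c a| := le_abs_self _
        _ = |w a - pl a| * |c a| := abs_mul _ _
        _ ≤ |w a - pl a| * 1 := mul_le_mul_of_nonneg_left (hcabs a) (abs_nonneg _)
        _ = |w a - pl a| := mul_one _
    have t2 : ∑ a ∈ Finset.univ.filter (fun a => ¬ pl a ≠ 0), (w a - pl a) * c a ≤ 0 := by
      refine Finset.sum_nonpos fun a ha => ?_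
      have hpla : pl a = 0 := not_not.mp (Finset.mem_filter.mp ha).2
      rw [hpla, sub_zero]
      exact mul_nonpos_of_nonneg_of_nonpos (aux_w_nonneg (hp0 a) (hpl a)) (hc a).2
    linarith

lemma aux_pi_integral {α : Type*} [MeasurableSpace α] (μ : Measure α) [IsProbabilityMeasure μ]
    {f : α → ℝ} (hmeas : Measurable f) (hint : Integrable f μ) (n : ℕ) (hn : 0 < n) :
    ∫ ω : Fin n → α, (n : ℝ)⁻¹ * ∑ i, f (ω i) ∂(Measure.pi fun _ => μ) = ∫ z, f z ∂μ := by
  have hMP : ∀ i : Fin n,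
      MeasurePreserving (fun ω : Fin n → α => ω i) (Measure.pi fun _ => μ) μ := by
    intro i
    refine ⟨measurable_pi_apply i, ?_⟩
    refine Measure.ext fun s hs => ?_
    rw [Measure.map_apply (measurable_pi_apply i) hs]
    have hpre : (fun ω : Fin n → α => ω i) ⁻¹' s
        = Set.pi Set.univ (Function.update (fun _ => Set.univ) i s) := by
      ext ω
      simp only [Set.mem_preimage, Set.mem_univ_pi, Function.update_apply]
      constructor
      · intro h j
        by_cases hj : j = i
        · subst hj; simpa using h
        · simp [hj]
      · intro h
        simpa using h i
    rw [hpre, Measure.pi_pi]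
    rw [Finset.prod_eq_single i
      (fun b _ hb => by simp [Function.update_apply, hb])
      (by simp)]
    simp [Function.update_apply]
  have hpi_int : ∀ i : Fin n,
      Integrable (fun ω : Fin n → α => f (ω i)) (Measure.pi fun _ => μ) := fun i =>
    ((hMP i).integrable_comp hmeas.aestronglyMeasurable).mpr hint
  have hpi_val : ∀ i : Fin n,
      ∫ ω : Fin n → α, f (ω i) ∂(Measure.pi fun _ => μ) = ∫ z, f z ∂μ := by
    intro i
    calc ∫ ω : Fin n → α, f (ω i) ∂(Measure.pi fun _ => μ)
        = ∫ z, f z ∂(Measure.map (fun ω : Fin n → α => ω i) (Measure.pi fun _ => μ)) :=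
          (integral_map (measurable_pi_apply i).aemeasurable hmeas.aestronglyMeasurable).symm
      _ = ∫ z, f z ∂μ := by rw [(hMP i).map_eq]
  rw [integral_const_mul, integral_finset_sum _ (fun i _ => hpi_int i)]
  rw [Finset.sum_congr rfl fun i _ => hpi_val i, Finset.sum_const, Finset.card_univ,
    Fintype.card_fin, nsmul_eq_mul]
  have hne : (n : ℝ) ≠ 0 := Nat.cast_ne_zero.mpr hn.ne'
  field_simp

end AuxLemmas

/-- **Bias of the IPS-β estimator.**  Off-policy contextual bandit setting with finite action
set `Fin K`, context distribution `ν`, logging policy `p0`, expected-cost function `c` taking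
values in `[-1, 0]`, and a Markov kernel `κ` describing the joint distribution of the taken
action and the observed stochastic cost given a context (action marginal `p0`, cost supported
in `[-1, 0]` with conditional mean `c`).  The logged data consists of `n` i.i.d. draws from
`ν ⊗ₘ κ`.  For `β ∈ [0,1]`, the bias of the IPS-β estimator of the risk of a policy `pl`
satisfies `|B(R̃ₙ^β(pl))| ≤ E_{x∼ν, a∼pl(·|x)}[|(p0(a|x)/pl(a|x))^(1−β) − 1|]` (the expectation
over `a ∼ pl(·|x)` weights each action by `pl(a|x)`, so only actions with `pl(a|x) > 0`
contribute). -/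
theorem ips_beta_bias_bound
    {X : Type*} [MeasurableSpace X] {K : ℕ}
    (ν : Measure X) [IsProbabilityMeasure ν]
    (p0 pl c : X → Fin K → ℝ)
    (hp0meas : ∀ a, Measurable fun x => p0 x a)
    (hplmeas : ∀ a, Measurable fun x => pl x a)
    (hcmeas : ∀ a, Measurable fun x => c x a)
    (hp0pos : ∀ x a, 0 < p0 x a) (hp0sum : ∀ x, ∑ a, p0 x a = 1)
    (hplnn : ∀ x a, 0 ≤ pl x a) (hplsum : ∀ x, ∑ a, pl x a = 1)
    (hc : ∀ x a, c x a ∈ Set.Icc (-1 : ℝ) 0)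
    (κ : Kernel X (Fin K × ℝ)) [IsMarkovKernel κ]
    (hκact : ∀ x a, κ x {p | p.1 = a} = ENNReal.ofReal (p0 x a))
    (hκsupp : ∀ x, ∀ᵐ p ∂(κ x), p.2 ∈ Set.Icc (-1 : ℝ) 0)
    (hκmean : ∀ x a, ∫ p in {p : Fin K × ℝ | p.1 = a}, p.2 ∂(κ x) = p0 x a * c x a)
    (n : ℕ) (hn : 0 < n) (β : ℝ) (hβ : β ∈ Set.Icc (0 : ℝ) 1) :
    |(∫ ω : Fin n → X × Fin K × ℝ,
          (n : ℝ)⁻¹ * ∑ i, (ω i).2.2 * (pl (ω i).1 (ω i).2.1 / p0 (ω i).1 (ω i).2.1) ^ β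
          ∂(Measure.pi fun _ => ν ⊗ₘ κ))
        - ∫ x, ∑ a, pl x a * c x a ∂ν|
      ≤ ∫ x, ∑ a, pl x a * |(p0 x a / pl x a) ^ (1 - β) - 1| ∂ν := by
  obtain ⟨hβ0, hβ1⟩ := hβ
  -- measurable-set and partition facts
  have hS : ∀ a : Fin K, MeasurableSet {p : Fin K × ℝ | p.1 = a} := fun a =>
    measurable_fst (measurableSet_singleton a)
  have hdisj : Pairwise (Function.onFun Disjoint fun a : Fin K => {p : Fin K × ℝ | p.1 = a}) := by
    intro a b hab
    simp only [Function.onFun]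
    rw [Set.disjoint_left]
    rintro p hp hq
    exact hab ((hp : p.1 = a).symm.trans hq)
  have hcover : (⋃ a : Fin K, {p : Fin K × ℝ | p.1 = a}) = Set.univ := by
    ext p; simp
  have hdecomp : ∀ (x : X) (F : Fin K × ℝ → ℝ), Integrable F (κ x) →
      ∫ p, F p ∂(κ x) = ∑ a, ∫ p in {p : Fin K × ℝ | p.1 = a}, F p ∂(κ x) := by
    intro x F hF
    rw [← setIntegral_univ (μ := κ x), ← hcover,
      integral_iUnion_fintype hS hdisj fun a => hF.integrableOn]
  -- measurability of fiber-wise functions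
  have hmeas_h : ∀ h : Fin K → ℝ, Measurable fun p : Fin K × ℝ => h p.1 :=
    fun h => (measurable_of_countable h).comp measurable_fst
  -- integrability of the relevant functions on each κ x
  have hint_h : ∀ (x : X) (h : Fin K → ℝ), Integrable (fun p : Fin K × ℝ => h p.1) (κ x) := by
    intro x h
    refine Integrable.mono' (integrable_const (∑ b, |h b|)) (hmeas_h h).aestronglyMeasurable
      (Filter.Eventually.of_forall fun p => ?_)
    rw [Real.norm_eq_abs]
    exact Finset.single_le_sum (f := fun b => |h b|) (fun b _ => abs_nonneg _) (Finset.mem_univ p.1)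
  have hint_mul : ∀ (x : X) (h : Fin K → ℝ),
      Integrable (fun p : Fin K × ℝ => p.2 * h p.1) (κ x) := by
    intro x h
    refine Integrable.mono' (integrable_const (∑ b, |h b|))
      (measurable_snd.mul (hmeas_h h)).aestronglyMeasurable ?_
    filter_upwards [hκsupp x] with p hp
    rw [Real.norm_eq_abs, abs_mul]
    have h1 : |p.2| ≤ 1 := abs_le.mpr ⟨hp.1, hp.2.trans zero_le_one⟩
    have h2 : |h p.1| ≤ ∑ b, |h b| :=
      Finset.single_le_sum (f := fun b => |h b|) (fun b _ => abs_nonneg _) (Finset.mem_univ p.1)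
    calc |p.2| * |h p.1| ≤ 1 * (∑ b, |h b|) :=
          mul_le_mul h1 h2 (abs_nonneg _) zero_le_one
      _ = ∑ b, |h b| := one_mul _
  -- values of the two kinds of fiber integrals
  have hval_mul : ∀ (x : X) (h : Fin K → ℝ),
      ∫ p, p.2 * h p.1 ∂(κ x) = ∑ a, h a * (p0 x a * c x a) := by
    intro x h
    rw [hdecomp x _ (hint_mul x h)]
    refine Finset.sum_congr rfl fun a _ => ?_
    have e1 : ∫ p in {p : Fin K × ℝ | p.1 = a}, p.2 * h p.1 ∂(κ x)
        = ∫ p in {p : Fin K × ℝ | p.1 = a}, p.2 * h a ∂(κ x) :=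
      setIntegral_congr_fun (hS a) fun p hp => by
        rw [show p.1 = a from hp]
    rw [e1, integral_mul_const, hκmean]
    ring
  have hval_h : ∀ (x : X) (h : Fin K → ℝ),
      ∫ p, h p.1 ∂(κ x) = ∑ a, h a * p0 x a := by
    intro x h
    rw [hdecomp x _ (hint_h x h)]
    refine Finset.sum_congr rfl fun a _ => ?_
    have e1 : ∫ p in {p : Fin K × ℝ | p.1 = a}, h p.1 ∂(κ x)
        = ∫ _ in {p : Fin K × ℝ | p.1 = a}, h a ∂(κ x) :=
      setIntegral_congr_fun (hS a) fun p hp => by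
        rw [show p.1 = a from hp]
    rw [e1, setIntegral_const, measureReal_def, hκact, ENNReal.toReal_ofReal (hp0pos x a).le, smul_eq_mul,
      mul_comm]
  -- the integrand of the estimator
  have hggmeas : Measurable fun q : X × Fin K => (pl q.1 q.2 / p0 q.1 q.2) ^ β := by
    refine measurable_from_prod_countable_left fun a => ?_
    show Measurable fun x => (pl x a / p0 x a) ^ β
    have h1 := hplmeas a
    have h2 := hp0meas a
    fun_prop
  have hf_meas : Measurable fun q : X × Fin K × ℝ =>
      q.2.2 * (pl q.1 q.2.1 / p0 q.1 q.2.1) ^ β := by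
    refine (measurable_snd.comp measurable_snd).mul ?_
    exact hggmeas.comp (measurable_fst.prodMk (measurable_fst.comp measurable_snd))
  -- integrability over the comp-prod measure
  have hf_int : Integrable (fun q : X × Fin K × ℝ =>
      q.2.2 * (pl q.1 q.2.1 / p0 q.1 q.2.1) ^ β) (ν ⊗ₘ κ) := by
    rw [Measure.integrable_compProd_iff hf_meas.aestronglyMeasurable]
    constructor
    · exact Filter.Eventually.of_forall fun x =>
        hint_mul x fun a => (pl x a / p0 x a) ^ β
    · refine Integrable.mono' (integrable_const 1)
        (hf_meas.norm.stronglyMeasurable.integral_kernel_prod_right').aestronglyMeasurable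
        (Filter.Eventually.of_forall fun x => ?_)
      rw [Real.norm_eq_abs, abs_of_nonneg (integral_nonneg fun y => norm_nonneg _)]
      have step1 : (∫ y, ‖y.2 * (pl x y.1 / p0 x y.1) ^ β‖ ∂(κ x))
          ≤ ∫ y : Fin K × ℝ, (fun a => (pl x a / p0 x a) ^ β) y.1 ∂(κ x) := by
        refine integral_mono_ae ((hint_mul x fun a => (pl x a / p0 x a) ^ β).norm)
          (hint_h x fun a => (pl x a / p0 x a) ^ β) ?_
        filter_upwards [hκsupp x] with y hy
        have h1 : |y.2| ≤ 1 := abs_le.mpr ⟨hy.1, hy.2.trans zero_le_one⟩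
        have h2 : (0 : ℝ) ≤ (pl x y.1 / p0 x y.1) ^ β :=
          Real.rpow_nonneg (div_nonneg (hplnn x y.1) (hp0pos x y.1).le) _
        rw [Real.norm_eq_abs, abs_mul, abs_of_nonneg h2]
        calc |y.2| * (pl x y.1 / p0 x y.1) ^ β ≤ 1 * (pl x y.1 / p0 x y.1) ^ β :=
              mul_le_mul_of_nonneg_right h1 h2
          _ = (fun a => (pl x a / p0 x a) ^ β) y.1 := one_mul _
      calc (∫ y, ‖y.2 * (pl x y.1 / p0 x y.1) ^ β‖ ∂(κ x))
          ≤ ∫ y : Fin K × ℝ, (fun a => (pl x a / p0 x a) ^ β) y.1 ∂(κ x) := step1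
        _ = ∑ a, (pl x a / p0 x a) ^ β * p0 x a := by
            simpa using hval_h x fun a => (pl x a / p0 x a) ^ β
        _ ≤ 1 := aux_sum_le_one (p0 x) (pl x) (hp0pos x) (hp0sum x) (hplnn x) (hplsum x) hβ0 hβ1
  -- value of the expectation of the estimator
  have hEf : (∫ q : X × Fin K × ℝ,
      q.2.2 * (pl q.1 q.2.1 / p0 q.1 q.2.1) ^ β ∂(ν ⊗ₘ κ))
      = ∫ x, ∑ a, (pl x a / p0 x a) ^ β * (p0 x a * c x a) ∂ν := by
    rw [Measure.integral_compProd hf_int]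
    refine integral_congr_ae (Filter.Eventually.of_forall fun x => ?_)
    simpa using hval_mul x fun a => (pl x a / p0 x a) ^ β
  -- reduce the product-measure integral
  have hE : (∫ ω : Fin n → X × Fin K × ℝ,
        (n : ℝ)⁻¹ * ∑ i, (ω i).2.2 * (pl (ω i).1 (ω i).2.1 / p0 (ω i).1 (ω i).2.1) ^ β
        ∂(Measure.pi fun _ => ν ⊗ₘ κ))
      = ∫ x, ∑ a, (pl x a / p0 x a) ^ β * (p0 x a * c x a) ∂ν :=
    (aux_pi_integral (ν ⊗ₘ κ) hf_meas hf_int n hn).trans hEf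
  rw [hE]
  -- integrability over ν of the three sums
  have hG1meas : Measurable fun x => ∑ a, (pl x a / p0 x a) ^ β * (p0 x a * c x a) := by
    refine Finset.measurable_sum _ fun a _ => ?_
    have h1 := hplmeas a
    have h2 := hp0meas a
    have h3 := hcmeas a
    fun_prop
  have hG2meas : Measurable fun x => ∑ a, pl x a * c x a := by
    refine Finset.measurable_sum _ fun a _ => ?_
    exact (hplmeas a).mul (hcmeas a)
  have hG3meas : Measurable fun x => ∑ a, pl x a * |(p0 x a / pl x a) ^ (1 - β) - 1| := by
    refine Finset.measurable_sum _ fun a _ => ?_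
    have h1 := hplmeas a
    have h2 := hp0meas a
    fun_prop
  have hG1int : Integrable (fun x => ∑ a, (pl x a / p0 x a) ^ β * (p0 x a * c x a)) ν := by
    refine Integrable.mono' (integrable_const 1) hG1meas.aestronglyMeasurable
      (Filter.Eventually.of_forall fun x => ?_)
    rw [Real.norm_eq_abs]
    calc |∑ a, (pl x a / p0 x a) ^ β * (p0 x a * c x a)|
        ≤ ∑ a, |(pl x a / p0 x a) ^ β * (p0 x a * c x a)| := Finset.abs_sum_le_sum_abs _ _
      _ ≤ ∑ a, (pl x a / p0 x a) ^ β * p0 x a := by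
          refine Finset.sum_le_sum fun a _ => ?_
          have h2 : (0 : ℝ) ≤ (pl x a / p0 x a) ^ β :=
            Real.rpow_nonneg (div_nonneg (hplnn x a) (hp0pos x a).le) _
          have hca : |c x a| ≤ 1 := abs_le.mpr ⟨(hc x a).1, (hc x a).2.trans zero_le_one⟩
          rw [abs_mul, abs_of_nonneg h2, abs_mul, abs_of_nonneg (hp0pos x a).le]
          calc (pl x a / p0 x a) ^ β * (p0 x a * |c x a|)
              ≤ (pl x a / p0 x a) ^ β * (p0 x a * 1) := by
                refine mul_le_mul_of_nonneg_left ?_ h2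
                exact mul_le_mul_of_nonneg_left hca (hp0pos x a).le
            _ = (pl x a / p0 x a) ^ β * p0 x a := by rw [mul_one]
      _ ≤ 1 := aux_sum_le_one (p0 x) (pl x) (hp0pos x) (hp0sum x) (hplnn x) (hplsum x) hβ0 hβ1
  have hG2int : Integrable (fun x => ∑ a, pl x a * c x a) ν := by
    refine Integrable.mono' (integrable_const 1) hG2meas.aestronglyMeasurable
      (Filter.Eventually.of_forall fun x => ?_)
    rw [Real.norm_eq_abs]
    calc |∑ a, pl x a * c x a| ≤ ∑ a, |pl x a * c x a| := Finset.abs_sum_le_sum_abs _ _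
      _ ≤ ∑ a, pl x a := by
          refine Finset.sum_le_sum fun a _ => ?_
          have hca : |c x a| ≤ 1 := abs_le.mpr ⟨(hc x a).1, (hc x a).2.trans zero_le_one⟩
          rw [abs_mul, abs_of_nonneg (hplnn x a)]
          calc pl x a * |c x a| ≤ pl x a * 1 := mul_le_mul_of_nonneg_left hca (hplnn x a)
            _ = pl x a := mul_one _
      _ = 1 := hplsum x
  have hG3int : Integrable (fun x => ∑ a, pl x a * |(p0 x a / pl x a) ^ (1 - β) - 1|) ν := by
    refine Integrable.mono' (integrable_const 3) hG3meas.aestronglyMeasurable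
      (Filter.Eventually.of_forall fun x => ?_)
    rw [Real.norm_eq_abs]
    have hnn : 0 ≤ ∑ a, pl x a * |(p0 x a / pl x a) ^ (1 - β) - 1| :=
      Finset.sum_nonneg fun a _ => mul_nonneg (hplnn x a) (abs_nonneg _)
    rw [abs_of_nonneg hnn]
    calc ∑ a, pl x a * |(p0 x a / pl x a) ^ (1 - β) - 1|
        ≤ ∑ a, (β * pl x a + (1 - β) * p0 x a + pl x a) :=
          Finset.sum_le_sum fun a _ => aux_term_le (hp0pos x a) (hplnn x a) hβ0 hβ1
      _ = 3 - 1 := by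
          rw [Finset.sum_add_distrib, Finset.sum_add_distrib, ← Finset.mul_sum, ← Finset.mul_sum,
            hplsum x, hp0sum x]
          ring
      _ ≤ 3 := by norm_num
  -- conclude
  rw [← integral_sub hG1int hG2int]
  calc |∫ x, (∑ a, (pl x a / p0 x a) ^ β * (p0 x a * c x a)) - ∑ a, pl x a * c x a ∂ν|
      ≤ ∫ x, |(∑ a, (pl x a / p0 x a) ^ β * (p0 x a * c x a)) - ∑ a, pl x a * c x a| ∂ν := by
        simpa [Real.norm_eq_abs] using
          norm_integral_le_integral_norm fun x =>
            (∑ a, (pl x a / p0 x a) ^ β * (p0 x a * c x a)) - ∑ a, pl x a * c x a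
    _ ≤ ∫ x, ∑ a, pl x a * |(p0 x a / pl x a) ^ (1 - β) - 1| ∂ν := by
        refine integral_mono (hG1int.sub hG2int).abs hG3int fun x => ?_
        exact aux_pointwise (p0 x) (pl x) (c x) (hp0pos x) (hp0sum x) (hplnn x) (hplsum x)
          (hc x) hβ0 hβ1
end

section
/- (Deterministic bound on the conditional bias term I₂) Fix contexts x_1,…,x_n ∈ X and α ∈ [0,1]. For every probability distribution Q on H, | (1/n)Σ_{i=1}^n E_{a∼π_Q(·|x_i)}[c(x_i,a)] − (1/n)Σ_{i=1}^n E_{a∼π0(·|x_i)}[ π_Q(a|x_i)·c(x_i,a)/π0(a|x_i)^α ] | ≤ (1/n)Σ_{i=1}^n E_{a∼π_Q(·|x_i)}[1 − π0(a|x_i)^{1−α}]. -/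
open MeasureTheory ProbabilityTheory Real

/-- **Deterministic bound on the conditional bias term `I₂`.**  For fixed contexts
`x 1, …, x n` and `α ∈ [0,1]`, the gap between the conditional risk of the policy `π_Q`
induced by a posterior `Q` and its smoothed conditional counterpart is bounded by the
conditional bias term. -/
theorem conditional_bias_bound
    {X : Type*} [MeasurableSpace X] {K : ℕ}
    {H : Type*} [MeasurableSpace H]
    (p0 c : X → Fin K → ℝ)
    (hp0pos : ∀ x a, 0 < p0 x a) (hp0sum : ∀ x, ∑ a, p0 x a = 1)
    (hc : ∀ x a, c x a ∈ Set.Icc (-1 : ℝ) 0)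
    (ev : H → X → Fin K)
    (hev : Measurable fun q : H × X => ev q.1 q.2)
    (n : ℕ) (hn : 0 < n) (x : Fin n → X)
    (α : ℝ) (hα : α ∈ Set.Icc (0 : ℝ) 1)
    (Q : Measure H) [IsProbabilityMeasure Q] :
    |(n : ℝ)⁻¹ * (∑ i, ∑ a, (Q {h | ev h (x i) = a}).toReal * c (x i) a)
        - (n : ℝ)⁻¹ * ∑ i, ∑ a, p0 (x i) a *
            ((Q {h | ev h (x i) = a}).toReal * c (x i) a / p0 (x i) a ^ α)|
      ≤ (n : ℝ)⁻¹ * ∑ i, ∑ a,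
          (Q {h | ev h (x i) = a}).toReal * (1 - p0 (x i) a ^ (1 - α)) := by
  have hninv : (0:ℝ) ≤ (n : ℝ)⁻¹ := by positivity
  rw [← mul_sub, abs_mul, abs_of_nonneg hninv]
  refine mul_le_mul_of_nonneg_left ?_ hninv
  rw [← Finset.sum_sub_distrib]
  refine (Finset.abs_sum_le_sum_abs _ _).trans (Finset.sum_le_sum fun i _ => ?_)
  rw [← Finset.sum_sub_distrib]
  refine (Finset.abs_sum_le_sum_abs _ _).trans (Finset.sum_le_sum fun a _ => ?_)
  set q := (Q {h | ev h (x i) = a}).toReal with hq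
  have hq0 : 0 ≤ q := ENNReal.toReal_nonneg
  have hp : 0 < p0 (x i) a := hp0pos _ _
  have hp1 : p0 (x i) a ≤ 1 := by
    have := Finset.single_le_sum (f := fun b => p0 (x i) b)
      (fun b _ => (hp0pos (x i) b).le) (Finset.mem_univ a)
    rw [hp0sum] at this; exact this
  have hexp : (0:ℝ) ≤ 1 - α := by linarith [hα.2]
  have hpow1 : p0 (x i) a ^ (1 - α) ≤ 1 := Real.rpow_le_one hp.le hp1 hexp
  have hpow0 : 0 < p0 (x i) a ^ (1 - α) := Real.rpow_pos_of_pos hp _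
  have key : p0 (x i) a * (q * c (x i) a / p0 (x i) a ^ α)
      = q * c (x i) a * (p0 (x i) a ^ (1 - α)) := by
    rw [Real.rpow_sub hp, Real.rpow_one]
    field_simp
  rw [key, ← mul_one_sub, abs_mul, abs_mul]
  have hc1 : |c (x i) a| ≤ 1 := by
    rcases hc (x i) a with ⟨h1, h2⟩
    rw [abs_le]; constructor <;> linarith
  have h1p : |1 - p0 (x i) a ^ (1 - α)| = 1 - p0 (x i) a ^ (1 - α) :=
    abs_of_nonneg (by linarith)
  rw [h1p, abs_of_nonneg hq0]
  calc q * |c (x i) a| * (1 - p0 (x i) a ^ (1 - α))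
      ≤ q * 1 * (1 - p0 (x i) a ^ (1 - α)) := by
        apply mul_le_mul_of_nonneg_right (mul_le_mul_of_nonneg_left hc1 hq0)
        linarith
    _ = q * (1 - p0 (x i) a ^ (1 - α)) := by ring
end

section
/- (Posterior-averaged second-moment bound) Fix contexts x_1,…,x_n ∈ X, actions a_1,…,a_n ∈ A, and α ∈ [0,1]. For h ∈ H and i ∈ {1,…,n} define f_i(a', h) = E_{a∼π0(·|x_i)}[ 1{h(x_i)=a}·c(x_i,a)/π0(a|x_i)^α ] − 1{h(x_i)=a'}·c(x_i,a')/π0(a'|x_i)^α. Then for every probability distribution Q on H: E_{h∼Q}[ Σ_{i=1}^n ( E_{a∼π0(·|x_i)}[f_i(a,h)²] + f_i(a_i,h)² ) ] ≤ Σ_{i=1}^n ( E_{a∼π0(·|x_i)}[ π_Q(a|x_i)·c(x_i,a)²/π0(a|x_i)^{2α} ] + π_Q(a_i|x_i)·c(x_i,a_i)²/π0(a_i|x_i)^{2α} ). -/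
open MeasureTheory ProbabilityTheory Real

/-- Auxiliary: the value of `f i a'` as a function of `b = ev h (x i)`. -/
noncomputable def Fterm {K : ℕ} (p c : Fin K → ℝ) (α : ℝ) (b a' : Fin K) : ℝ :=
  (∑ a, p a * ((if b = a then (1 : ℝ) else 0) * c a / p a ^ α))
    - (if b = a' then (1 : ℝ) else 0) * c a' / p a' ^ α

noncomputable def Lterm {K : ℕ} (p c : Fin K → ℝ) (α : ℝ) (a0 b : Fin K) : ℝ :=
  (∑ a, p a * (Fterm p c α b a) ^ 2) + (Fterm p c α b a0) ^ 2

noncomputable def Rterm {K : ℕ} (p c : Fin K → ℝ) (α : ℝ) (a0 b : Fin K) : ℝ :=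
  p b * (c b ^ 2 / p b ^ (2 * α))
    + (if b = a0 then c a0 ^ 2 / p a0 ^ (2 * α) else 0)

lemma sum_ind (K : ℕ) (p c : Fin K → ℝ) (α : ℝ) (b : Fin K) (hpos : ∀ a, 0 < p a) :
    (∑ a, p a * ((if b = a then (1 : ℝ) else 0) * c a / p a ^ α))
      = p b * (c b / p b ^ α) := by
  rw [Finset.sum_eq_single b (fun a' _ hne => by simp [Ne.symm hne])
    (fun hb => absurd (Finset.mem_univ b) hb)]
  simp [mul_div_assoc]

lemma LR_le {K : ℕ} (p c : Fin K → ℝ) (α : ℝ) (a0 b : Fin K)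
    (hpos : ∀ a, 0 < p a) (hsum : ∑ a, p a = 1) :
    Lterm p c α a0 b ≤ Rterm p c α a0 b := by
  have hp := hpos b
  have hp1 : p b ≤ 1 := hsum ▸ Finset.single_le_sum (fun a _ => (hpos a).le) (Finset.mem_univ b)
  have hS := sum_ind K p c α b hpos
  set t : ℝ := c b / p b ^ α with ht
  clear_value t
  have ht2 : ∀ a : Fin K, c a ^ 2 / p a ^ (2 * α) = (c a / p a ^ α) ^ 2 := by
    intro a
    have h1 : p a ^ (2 * α) = (p a ^ α) ^ (2 : ℕ) := by
      rw [show (2 * α) = α * 2 by ring, Real.rpow_mul (hpos a).le,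
        show ((2 : ℝ)) = ((2 : ℕ) : ℝ) by norm_num, Real.rpow_natCast]
    rw [h1, div_pow]
  have hsum2 : (∑ a, p a * (Fterm p c α b a) ^ 2)
      = p b * (p b * t - t) ^ 2 - p b * (p b * t) ^ 2 + (p b * t) ^ 2 := by
    have hterm : ∀ a, p a * (Fterm p c α b a) ^ 2
        = (if b = a then p a * (p b * t - c a / p a ^ α) ^ 2 - p a * (p b * t) ^ 2 else 0)
          + p a * (p b * t) ^ 2 := by
      intro a
      by_cases hba : b = a
      · subst hba
        have hFb : Fterm p c α b b = p b * t - c b / p b ^ α := by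
          unfold Fterm; rw [hS, if_pos rfl, one_mul]
        rw [hFb, if_pos rfl]
        ring
      · have hFa : Fterm p c α b a = p b * t := by
          unfold Fterm; rw [hS, if_neg hba]; ring
        rw [hFa, if_neg hba]
        ring
    simp only [hterm, Finset.sum_add_distrib, Finset.sum_ite_eq, Finset.mem_univ, if_true,
      ← Finset.sum_mul, hsum, one_mul, ← ht]
  have hF0 : Fterm p c α b a0
      = p b * t - (if b = a0 then (1 : ℝ) else 0) * c a0 / p a0 ^ α := by
    simp only [Fterm, hS]
  unfold Lterm Rterm
  rw [hsum2, hF0, ht2 b, ← ht]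
  by_cases hb : b = a0
  · subst hb
    rw [if_pos rfl, if_pos rfl, ht2 b, one_mul, ← ht]
    have h1 : (0:ℝ) ≤ t ^ 2 := sq_nonneg t
    nlinarith [mul_nonneg hp.le h1]
  · rw [if_neg hb, if_neg hb, zero_mul, zero_div, sub_zero]
    nlinarith [sq_nonneg t]

/-- **Posterior-averaged second-moment bound.**  For fixed contexts `x i` and actions
`av i`, the posterior expectation of the sum of conditional and empirical squared martingale
increments is bounded by the corresponding second-moment terms of the induced policy `π_Q`. -/
theorem posterior_second_moment_bound
    {X : Type*} [MeasurableSpace X] {K : ℕ}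
    {H : Type*} [MeasurableSpace H]
    (p0 c : X → Fin K → ℝ)
    (hp0pos : ∀ x a, 0 < p0 x a) (hp0sum : ∀ x, ∑ a, p0 x a = 1)
    (hc : ∀ x a, c x a ∈ Set.Icc (-1 : ℝ) 0)
    (ev : H → X → Fin K)
    (hev : Measurable fun q : H × X => ev q.1 q.2)
    (n : ℕ) (x : Fin n → X) (av : Fin n → Fin K)
    (α : ℝ) (hα : α ∈ Set.Icc (0 : ℝ) 1)
    (f : Fin n → Fin K → H → ℝ)
    (hf : ∀ (i : Fin n) (a' : Fin K) (h : H), f i a' h =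
      (∑ a, p0 (x i) a * ((if ev h (x i) = a then (1 : ℝ) else 0) * c (x i) a
          / p0 (x i) a ^ α))
        - (if ev h (x i) = a' then (1 : ℝ) else 0) * c (x i) a' / p0 (x i) a' ^ α)
    (Q : Measure H) [IsProbabilityMeasure Q] :
    (∫ h, ∑ i, ((∑ a, p0 (x i) a * f i a h ^ 2) + f i (av i) h ^ 2) ∂Q)
      ≤ ∑ i, ((∑ a, p0 (x i) a * ((Q {h | ev h (x i) = a}).toReal * c (x i) a ^ 2
            / p0 (x i) a ^ (2 * α)))
          + (Q {h | ev h (x i) = av i}).toReal * c (x i) (av i) ^ 2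
              / p0 (x i) (av i) ^ (2 * α)) := by
  have hSmeas : ∀ (i : Fin n) (b : Fin K), MeasurableSet {h : H | ev h (x i) = b} := by
    intro i b
    exact (hev.comp (measurable_id.prodMk measurable_const)) (measurableSet_singleton b)
  have hkey : ∀ h : H,
      (∑ i, ((∑ a, p0 (x i) a * f i a h ^ 2) + f i (av i) h ^ 2))
        = ∑ i, ∑ b, (if ev h (x i) = b then (1 : ℝ) else 0)
            * Lterm (p0 (x i)) (c (x i)) α (av i) b := by
    intro h
    refine Finset.sum_congr rfl fun i _ => ?_
    have : (∑ b, (if ev h (x i) = b then (1 : ℝ) else 0)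
        * Lterm (p0 (x i)) (c (x i)) α (av i) b)
        = Lterm (p0 (x i)) (c (x i)) α (av i) (ev h (x i)) := by
      simp
    rw [this]
    simp only [Lterm, Fterm, hf]
  have hindic : ∀ (i : Fin n) (b : Fin K),
      (fun h => (if ev h (x i) = b then (1 : ℝ) else 0)
        * Lterm (p0 (x i)) (c (x i)) α (av i) b)
      = Set.indicator {h : H | ev h (x i) = b}
          (fun _ => Lterm (p0 (x i)) (c (x i)) α (av i) b) := by
    intro i b
    ext h
    by_cases hh : ev h (x i) = b <;> simp [Set.indicator, hh]
  have hInt : ∀ (i : Fin n) (b : Fin K),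
      Integrable (fun h => (if ev h (x i) = b then (1 : ℝ) else 0)
        * Lterm (p0 (x i)) (c (x i)) α (av i) b) Q := by
    intro i b
    rw [hindic]
    exact (integrable_const _).indicator (hSmeas i b)
  have hIval : ∀ (i : Fin n) (b : Fin K),
      (∫ h, (if ev h (x i) = b then (1 : ℝ) else 0)
        * Lterm (p0 (x i)) (c (x i)) α (av i) b ∂Q)
      = (Q {h : H | ev h (x i) = b}).toReal * Lterm (p0 (x i)) (c (x i)) α (av i) b := by
    intro i b
    rw [hindic, MeasureTheory.integral_indicator_const _ (hSmeas i b), smul_eq_mul, measureReal_def]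
  have hfun : (fun h => ∑ i, ((∑ a, p0 (x i) a * f i a h ^ 2) + f i (av i) h ^ 2))
      = fun h => ∑ i, ∑ b, (if ev h (x i) = b then (1 : ℝ) else 0)
          * Lterm (p0 (x i)) (c (x i)) α (av i) b := funext hkey
  calc (∫ h, ∑ i, ((∑ a, p0 (x i) a * f i a h ^ 2) + f i (av i) h ^ 2) ∂Q)
      = ∑ i, ∑ b, (Q {h : H | ev h (x i) = b}).toReal
          * Lterm (p0 (x i)) (c (x i)) α (av i) b := by
        rw [hfun, MeasureTheory.integral_finset_sum _
          (fun i _ => integrable_finset_sum _ (fun b _ => hInt i b))]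
        refine Finset.sum_congr rfl fun i _ => ?_
        rw [MeasureTheory.integral_finset_sum _ (fun b _ => hInt i b)]
        exact Finset.sum_congr rfl fun b _ => hIval i b
    _ ≤ ∑ i, ∑ b, (Q {h : H | ev h (x i) = b}).toReal
          * Rterm (p0 (x i)) (c (x i)) α (av i) b := by
        refine Finset.sum_le_sum fun i _ => Finset.sum_le_sum fun b _ =>
          mul_le_mul_of_nonneg_left
            (LR_le _ _ _ _ _ (hp0pos (x i)) (hp0sum (x i))) ENNReal.toReal_nonneg
    _ = ∑ i, ((∑ a, p0 (x i) a * ((Q {h | ev h (x i) = a}).toReal * c (x i) a ^ 2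
            / p0 (x i) a ^ (2 * α)))
          + (Q {h | ev h (x i) = av i}).toReal * c (x i) (av i) ^ 2
              / p0 (x i) (av i) ^ (2 * α)) := by
        refine Finset.sum_congr rfl fun i _ => ?_
        simp only [Rterm, mul_add, Finset.sum_add_distrib]
        congr 1
        · exact Finset.sum_congr rfl fun a _ => by ring
        · simp only [mul_ite, mul_zero, Finset.sum_ite_eq', Finset.mem_univ, if_true]
          ring
end

section
/- (High-probability bound on the conditional estimation error I₃) Fix contexts x_1,…,x_n ∈ X, λ > 0, δ ∈ (0,1), α ∈ [0,1], and a fixed prior P on H. Let a_1,…,a_n be independent with a_i ∼ π0(·|x_i) and set c_i = c(x_i,a_i). Define R^α(π_Q|x_i) = E_{a∼π0(·|x_i)}[ π_Q(a|x_i)·c(x_i,a)/π0(a|x_i)^α ] and R̂_n^α(π_Q) = (1/n)Σ_{i=1}^n c_i π_Q(a_i|x_i)/π0(a_i|x_i)^α. Then with probability at least 1−δ, simultaneously for all posteriors Q on H: | (1/n)Σ_{i=1}^n R^α(π_Q|x_i) − R̂_n^α(π_Q) | ≤ (D_KL(Q‖P)+log(2/δ))/(nλ) + (λ/(2n))·Σ_{i=1}^n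 E_{a∼π0(·|x_i)}[π_Q(a|x_i)/π0(a|x_i)^{2α}] + (λ/(2n))·Σ_{i=1}^n π_Q(a_i|x_i)c_i²/π0(a_i|x_i)^{2α}. -/
open MeasureTheory ProbabilityTheory Real

open Classical in
/-- Kullback–Leibler divergence between two measures, valued in `ℝ≥0∞` (junk value `⊤` when
`Q` is not absolutely continuous w.r.t. `P` or the log-likelihood ratio is not integrable). -/
noncomputable def klDiv {α : Type*} [MeasurableSpace α] (Q P : Measure α) : ENNReal :=
  if Q ≪ P ∧ Integrable (llr Q P) Q then ENNReal.ofReal (∫ x, llr Q P x ∂Q) else ⊤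

open scoped ENNReal NNReal

lemma exp_le_quadratic_of_nonpos {t : ℝ} (ht : t ≤ 0) : Real.exp t ≤ 1 + t + t ^ 2 / 2 := by
  have h1 : 1 + (-t) + (-t) ^ 2 / 2 ≤ Real.exp (-t) := Real.quadratic_le_exp_of_nonneg (by linarith)
  have h2 : Real.exp t * Real.exp (-t) = 1 := by rw [← Real.exp_add]; simp
  have h3 : (0:ℝ) < Real.exp t := Real.exp_pos t
  have h4 : Real.exp t * (1 - t + t ^ 2 / 2) ≤ 1 := by nlinarith
  nlinarith [sq_nonneg (t ^ 2), sq_nonneg t]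

lemma exp_sub_half_sq_le {u : ℝ} (hu : 0 ≤ u) : Real.exp (u - u ^ 2 / 2) ≤ 1 + u := by
  set f : ℝ → ℝ := fun v => 1 + v - Real.exp (v - v ^ 2 / 2) with hf
  have hderiv : ∀ v : ℝ, HasDerivAt f (1 - (1 - v) * Real.exp (v - v ^ 2 / 2)) v := by
    intro v
    have h1 : HasDerivAt (fun v : ℝ => v - v ^ 2 / 2) (1 - v) v := by
      have := (hasDerivAt_id v).sub ((hasDerivAt_pow 2 v).div_const 2)
      exact this.congr_deriv (by norm_num)
    have h2 : HasDerivAt (fun v : ℝ => Real.exp (v - v ^ 2 / 2))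
        (Real.exp (v - v ^ 2 / 2) * (1 - v)) v := (Real.hasDerivAt_exp _).comp v h1
    have h3 : HasDerivAt (fun v : ℝ => 1 + v) 1 v := (hasDerivAt_id v).const_add 1
    have := h3.sub h2
    exact this.congr_deriv (by ring)
  have hmono : MonotoneOn f (Set.Ici 0) := by
    apply monotoneOn_of_deriv_nonneg (convex_Ici 0)
    · exact (Continuous.sub (by continuity) (by continuity)).continuousOn
    · intro v _
      exact (hderiv v).differentiableAt.differentiableWithinAt
    · intro v hv
      rw [interior_Ici] at hv
      rw [(hderiv v).deriv]
      rcases le_or_gt (1 - v) 0 with h | h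
      · nlinarith [mul_nonpos_of_nonpos_of_nonneg h (Real.exp_pos (v - v ^ 2 / 2)).le]
      · have e1 : (1 - v) ≤ Real.exp (-v) := Real.one_sub_le_exp_neg v
        have e2 : Real.exp (v - v ^ 2 / 2) ≤ Real.exp v := by
          apply Real.exp_le_exp.mpr; nlinarith [sq_nonneg v, (Set.mem_Ioi.mp hv).le]
        have e3 := mul_le_mul e1 e2 (Real.exp_pos _).le (by positivity)
        rw [← Real.exp_add] at e3
        simp only [neg_add_cancel, Real.exp_zero] at e3
        linarith
  have h0 : f 0 ≤ f u := hmono Set.self_mem_Ici hu hu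
  simp only [hf] at h0
  norm_num at h0
  linarith

lemma factA {pb v lam : ℝ} (h0 : 0 ≤ pb) (hv : v ≤ 0) (hl : 0 ≤ lam) :
    (1 - pb) * Real.exp (lam * (0 - pb * v) - lam ^ 2 / 2 * (pb * v ^ 2))
      + pb * Real.exp (lam * (v - pb * v) - lam ^ 2 / 2 * (pb * v ^ 2)) ≤ 1 := by
  have hD : Real.exp (lam * (0 - pb * v) - lam ^ 2 / 2 * (pb * v ^ 2)) = Real.exp (-(lam * (pb * v) + lam ^ 2 / 2 * (pb * v ^ 2))) := by
    congr 1; ring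
  have h2 : Real.exp (lam * (v - pb * v) - lam ^ 2 / 2 * (pb * v ^ 2))
      = Real.exp (lam * v) * Real.exp (-(lam * (pb * v) + lam ^ 2 / 2 * (pb * v ^ 2))) := by
    rw [← Real.exp_add]; congr 1; ring
  rw [hD, h2]
  have hq := exp_le_quadratic_of_nonpos (mul_nonpos_of_nonneg_of_nonpos hl hv)
  have hx := Real.add_one_le_exp (lam * (pb * v) + lam ^ 2 / 2 * (pb * v ^ 2))
  have hS : (1 - pb) + pb * Real.exp (lam * v) ≤ Real.exp (lam * (pb * v) + lam ^ 2 / 2 * (pb * v ^ 2)) := by nlinarith [mul_le_mul_of_nonneg_left hq h0, hx]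
  calc (1 - pb) * Real.exp (-(lam * (pb * v) + lam ^ 2 / 2 * (pb * v ^ 2))) + pb * (Real.exp (lam * v) * Real.exp (-(lam * (pb * v) + lam ^ 2 / 2 * (pb * v ^ 2))))
      = ((1 - pb) + pb * Real.exp (lam * v)) * Real.exp (-(lam * (pb * v) + lam ^ 2 / 2 * (pb * v ^ 2))) := by ring
    _ ≤ Real.exp (lam * (pb * v) + lam ^ 2 / 2 * (pb * v ^ 2)) * Real.exp (-(lam * (pb * v) + lam ^ 2 / 2 * (pb * v ^ 2))) := mul_le_mul_of_nonneg_right hS (Real.exp_pos _).le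
    _ = 1 := by rw [← Real.exp_add, add_neg_cancel, Real.exp_zero]

lemma factB {pb v lam : ℝ} (h0 : 0 ≤ pb) (hv : v ≤ 0) (hl : 0 ≤ lam) :
    (1 - pb) * Real.exp (lam * (pb * v - 0) - lam ^ 2 / 2 * 0 ^ 2)
      + pb * Real.exp (lam * (pb * v - v) - lam ^ 2 / 2 * v ^ 2) ≤ 1 := by
  set u : ℝ := -(lam * v) with hu'
  have hu : 0 ≤ u := by rw [hu']; nlinarith
  have h1 : Real.exp (lam * (pb * v - 0) - lam ^ 2 / 2 * 0 ^ 2) = Real.exp (lam * (pb * v)) := by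
    congr 1; ring
  have h2 : Real.exp (lam * (pb * v - v) - lam ^ 2 / 2 * v ^ 2)
      = Real.exp (u - u ^ 2 / 2) * Real.exp (lam * (pb * v)) := by
    rw [← Real.exp_add]; congr 1; rw [hu']; ring
  rw [h1, h2]
  have hB := exp_sub_half_sq_le hu
  have hS : (1 - pb) + pb * Real.exp (u - u ^ 2 / 2) ≤ 1 + pb * u := by nlinarith
  have hE : 1 + pb * u ≤ Real.exp (pb * u) := by linarith [Real.add_one_le_exp (pb * u)]
  have hpu : Real.exp (pb * u) * Real.exp (lam * (pb * v)) = 1 := by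
    rw [← Real.exp_add, show pb * u + lam * (pb * v) = 0 by rw [hu']; ring, Real.exp_zero]
  calc (1 - pb) * Real.exp (lam * (pb * v)) + pb * (Real.exp (u - u ^ 2 / 2) * Real.exp (lam * (pb * v)))
      = ((1 - pb) + pb * Real.exp (u - u ^ 2 / 2)) * Real.exp (lam * (pb * v)) := by ring
    _ ≤ Real.exp (pb * u) * Real.exp (lam * (pb * v)) :=
        mul_le_mul_of_nonneg_right (hS.trans hE) (Real.exp_pos _).le
    _ = 1 := hpu

lemma integrable_of_bdd {H : Type*} [MeasurableSpace H] {ρ : Measure H} [IsFiniteMeasure ρ]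
    {f : H → ℝ} (hf : Measurable f) {C : ℝ} (hb : ∀ h, |f h| ≤ C) : Integrable f ρ :=
  ⟨hf.aestronglyMeasurable,
    HasFiniteIntegral.of_bounded (C := C) (ae_of_all _ fun h => by
      simpa [Real.norm_eq_abs] using hb h)⟩

lemma change_of_measure {H : Type*} [MeasurableSpace H] (P Q : Measure H)
    [IsProbabilityMeasure P] [IsProbabilityMeasure Q] (hKL : klDiv Q P ≠ ⊤)
    {g : H → ℝ} (hg : Measurable g) {C : ℝ} (hb : ∀ h, |g h| ≤ C)
    {Z : ℝ} (hZ : 0 < Z) (hPZ : ∫ h, Real.exp (g h) ∂P ≤ Z) :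
    ∫ h, g h ∂Q ≤ (klDiv Q P).toReal + Real.log Z := by
  classical
  have hcond : Q ≪ P ∧ Integrable (llr Q P) Q := by
    by_contra hc
    exact hKL (by rw [klDiv, if_neg hc])
  obtain ⟨hac, hillr⟩ := hcond
  have hllr_le : ∫ h, llr Q P h ∂Q ≤ (klDiv Q P).toReal := by
    rw [klDiv, if_pos ⟨hac, hillr⟩]
    rcases le_or_gt 0 (∫ h, llr Q P h ∂Q) with h | h
    · rw [ENNReal.toReal_ofReal h]
    · rw [ENNReal.ofReal_of_nonpos h.le]; simpa using h.le
  have hg'm : Measurable (fun h => g h - Real.log Z) := hg.sub measurable_const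
  have hg'b : ∀ h, |g h - Real.log Z| ≤ C + |Real.log Z| := fun h =>
    (abs_sub _ _).trans (by linarith [hb h])
  have hg'bexp : ∀ h, |Real.exp (g h - Real.log Z)| ≤ Real.exp (C + |Real.log Z|) := fun h => by
    rw [abs_of_nonneg (Real.exp_pos _).le]
    exact Real.exp_le_exp.mpr ((le_abs_self _).trans (hg'b h))
  have hexpg'P : Integrable (fun h => Real.exp (g h - Real.log Z)) P :=
    integrable_of_bdd (hg'm.exp) hg'bexp
  have hPint : ∫ h, Real.exp (g h - Real.log Z) ∂P ≤ 1 := by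
    have he : (fun h => Real.exp (g h - Real.log Z)) = fun h => Real.exp (g h) / Z := by
      funext h; rw [Real.exp_sub, Real.exp_log hZ]
    rw [he, integral_div]
    exact (div_le_one hZ).mpr hPZ
  set d : H → ℝ := fun h => (Q.rnDeriv P h).toReal with hd
  have hdm : Measurable d := (Measure.measurable_rnDeriv Q P).ennreal_toReal
  have hdnn : ∀ h, 0 ≤ d h := fun h => ENNReal.toReal_nonneg
  have hQd : P.withDensity (fun h => ((d h).toNNReal : ℝ≥0∞)) = Q := by
    have h1 : (fun h => ((d h).toNNReal : ℝ≥0∞)) =ᵐ[P] Q.rnDeriv P := by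
      filter_upwards [Q.rnDeriv_lt_top P] with h hh
      show ENNReal.ofReal ((Q.rnDeriv P h).toReal) = Q.rnDeriv P h
      exact ENNReal.ofReal_toReal hh.ne
    rw [withDensity_congr_ae h1, Measure.withDensity_rnDeriv_eq Q P hac]
  set F : H → ℝ := fun h => Real.exp (g h - Real.log Z - llr Q P h) with hF
  have hFm : Measurable F := (hg'm.sub (measurable_llr Q P)).exp
  have hkey : ∀ h, d h * F h ≤ Real.exp (g h - Real.log Z) := by
    intro h
    rcases eq_or_lt_of_le (hdnn h) with h0 | h0
    · rw [← h0, zero_mul]; exact (Real.exp_pos _).le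
    · have hllrh : llr Q P h = Real.log (d h) := rfl
      have : F h = Real.exp (g h - Real.log Z) / d h := by
        rw [hF]; show Real.exp _ = _
        rw [sub_eq_add_neg (g h - Real.log Z), Real.exp_add, hllrh, Real.exp_neg,
          Real.exp_log h0, div_eq_mul_inv]
      rw [this, mul_div_cancel₀ _ (ne_of_gt h0)]
  have hkeynn : ∀ h, 0 ≤ d h * F h := fun h =>
    mul_nonneg (hdnn h) (Real.exp_pos _).le
  have hdF_int : Integrable (fun h => d h * F h) P := by
    apply Integrable.mono' hexpg'P ((hdm.mul hFm).aestronglyMeasurable)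
    exact ae_of_all _ fun h => by
      rw [Real.norm_eq_abs, Pi.mul_apply, abs_of_nonneg (hkeynn h)]; exact hkey h
  have hsmul : (fun h => (d h).toNNReal • F h) = fun h => d h * F h := funext fun h => by
    rw [NNReal.smul_def, Real.coe_toNNReal _ (hdnn h), smul_eq_mul]
  have hFQ_int : Integrable F Q := by
    rw [← hQd, integrable_withDensity_iff_integrable_smul hdm.real_toNNReal, hsmul]
    exact hdF_int
  have hFQ_val : ∫ h, F h ∂Q ≤ ∫ h, Real.exp (g h - Real.log Z) ∂P := by
    rw [← hQd, integral_withDensity_eq_integral_smul hdm.real_toNNReal]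
    calc ∫ h, (d h).toNNReal • F h ∂P = ∫ h, d h * F h ∂P := by rw [hsmul]
      _ ≤ ∫ h, Real.exp (g h - Real.log Z) ∂P := integral_mono hdF_int hexpg'P hkey
  have hgQ : Integrable g Q := integrable_of_bdd hg hb
  have hg'Q : Integrable (fun h => g h - Real.log Z) Q := hgQ.sub (integrable_const _)
  have hmain : ∫ h, (g h - Real.log Z - llr Q P h) ∂Q ≤ ∫ h, (F h - 1) ∂Q := by
    apply integral_mono (hg'Q.sub hillr) (hFQ_int.sub (integrable_const 1))
    intro h
    have := Real.add_one_le_exp (g h - Real.log Z - llr Q P h)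
    show g h - Real.log Z - llr Q P h ≤ F h - 1
    rw [hF]
    simp only []
    linarith
  rw [integral_sub hg'Q hillr, integral_sub hFQ_int (integrable_const 1),
    integral_sub hgQ (integrable_const _)] at hmain
  simp only [integral_const, measure_univ, probReal_univ, ENNReal.toReal_one, smul_eq_mul, one_mul] at hmain
  linarith [hFQ_val, hPint, hllr_le]

lemma pac_core {H : Type*} [MeasurableSpace H] (P : Measure H) [IsProbabilityMeasure P]
    {K n : ℕ} (p : Fin n → Fin K → ℝ) (hp : ∀ i a, 0 < p i a) (hpsum : ∀ i, ∑ a, p i a = 1)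
    (t : Fin n → Fin K → H → ℝ) (ht_meas : ∀ i a, Measurable (t i a))
    (C : ℝ) (ht_bdd : ∀ i a h, |t i a h| ≤ C)
    (ht_exp : ∀ i h, ∑ a, p i a * Real.exp (t i a h) ≤ 1)
    (δ' : ℝ) (hδ' : 0 < δ') :
    (Measure.pi fun i : Fin n => ∑ a, ENNReal.ofReal (p i a) • Measure.dirac a)
      {av | ¬ ∀ Q : Measure H, IsProbabilityMeasure Q → klDiv Q P ≠ ⊤ →
          ∑ i, ∫ h, t i (av i) h ∂Q ≤ (klDiv Q P).toReal + Real.log (1 / δ')} ≤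
      ENNReal.ofReal δ' := by
  classical
  have hνprob : ∀ i : Fin n,
      IsProbabilityMeasure (∑ a, ENNReal.ofReal (p i a) • Measure.dirac a) := by
    intro i
    constructor
    rw [Measure.finset_sum_apply]
    simp only [Measure.smul_apply, measure_univ, smul_eq_mul, mul_one]
    rw [← ENNReal.ofReal_sum_of_nonneg fun a _ => (hp i a).le, hpsum i, ENNReal.ofReal_one]
  set ν : Fin n → Measure (Fin K) := fun i => ∑ a, ENNReal.ofReal (p i a) • Measure.dirac a
    with hν
  haveI : ∀ i, IsProbabilityMeasure (ν i) := hνprob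
  set μ : Measure (Fin n → Fin K) := Measure.pi ν with hμ
  haveI : IsProbabilityMeasure μ := by rw [hμ]; infer_instance
  have hνs : ∀ (i : Fin n) (a : Fin K), ν i {a} = ENNReal.ofReal (p i a) := by
    intro i a
    rw [hν]
    simp only []
    rw [Measure.finset_sum_apply]
    rw [Finset.sum_eq_single a]
    · simp [Measure.dirac_apply]
    · intro b _ hb
      simp [Measure.dirac_apply, Set.indicator_apply, Set.mem_singleton_iff, hb]
    · intro habs; exact absurd (Finset.mem_univ a) habs
  have hμs : ∀ av : Fin n → Fin K, μ {av} = ENNReal.ofReal (∏ i, p i (av i)) := by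
    intro av
    have h1 : ({av} : Set (Fin n → Fin K)) = Set.pi Set.univ (fun i => {av i}) :=
      (Set.univ_pi_singleton av).symm
    rw [h1, hμ, Measure.pi_pi]
    simp_rw [hνs]
    rw [← ENNReal.ofReal_prod_of_nonneg fun i _ => (hp i (av i)).le]
  set G : (Fin n → Fin K) → ℝ := fun av => ∫ h, Real.exp (∑ i, t i (av i) h) ∂P with hG
  have hsum_meas : ∀ av : Fin n → Fin K, Measurable (fun h => ∑ i, t i (av i) h) := fun av =>
    Finset.measurable_sum _ fun i _ => ht_meas i (av i)
  have hsum_bdd : ∀ (av : Fin n → Fin K) (h : H), |∑ i, t i (av i) h| ≤ n * C := by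
    intro av h
    calc |∑ i, t i (av i) h| ≤ ∑ i, |t i (av i) h| := Finset.abs_sum_le_sum_abs _ _
      _ ≤ ∑ _i : Fin n, C := Finset.sum_le_sum fun i _ => ht_bdd i (av i) h
      _ = n * C := by simp [Finset.sum_const, nsmul_eq_mul]
  have hexp_bdd : ∀ (av : Fin n → Fin K) (h : H), |Real.exp (∑ i, t i (av i) h)| ≤ Real.exp (n * C) := by
    intro av h
    rw [abs_of_nonneg (Real.exp_pos _).le]
    exact Real.exp_le_exp.mpr ((le_abs_self _).trans (hsum_bdd av h))
  have hterm_int : ∀ av : Fin n → Fin K,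
      Integrable (fun h => (∏ i, p i (av i)) * Real.exp (∑ i, t i (av i) h)) P := by
    intro av
    refine integrable_of_bdd ((hsum_meas av).exp.const_mul _)
      (C := |∏ i, p i (av i)| * Real.exp (n * C)) fun h => ?_
    rw [abs_mul]
    exact mul_le_mul_of_nonneg_left (hexp_bdd av h) (abs_nonneg _)
  have hG_nonneg : ∀ av : Fin n → Fin K, 0 ≤ G av := fun av =>
    integral_nonneg fun h => (Real.exp_pos _).le
  have hint : ∫ av, G av ∂μ ≤ 1 := by
    have hwt : ∀ av : Fin n → Fin K, (μ {av}).toReal = ∏ i, p i (av i) := fun av => by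
      rw [hμs av, ENNReal.toReal_ofReal (Finset.prod_nonneg fun i _ => (hp i (av i)).le)]
    calc ∫ av, G av ∂μ = ∑ av, (μ {av}).toReal • G av :=
          integral_fintype (μ := μ) (Integrable.of_finite (f := G))
      _ = ∑ av : Fin n → Fin K, ∫ h, (∏ i, p i (av i)) * Real.exp (∑ i, t i (av i) h) ∂P := by
          refine Finset.sum_congr rfl fun av _ => ?_
          rw [hwt av, smul_eq_mul, hG]
          exact (integral_const_mul _ _).symm
      _ = ∫ h, ∑ av : Fin n → Fin K, (∏ i, p i (av i)) * Real.exp (∑ i, t i (av i) h) ∂P :=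
          (integral_finset_sum _ fun av _ => hterm_int av).symm
      _ ≤ ∫ _h, (1 : ℝ) ∂P := by
          refine integral_mono (integrable_finset_sum _ fun av _ => hterm_int av)
            (integrable_const 1) fun h => ?_
          have hrw : ∀ av : Fin n → Fin K,
              (∏ i, p i (av i)) * Real.exp (∑ i, t i (av i) h)
                = ∏ i, (p i (av i) * Real.exp (t i (av i) h)) := by
            intro av
            rw [Real.exp_sum, ← Finset.prod_mul_distrib]
          show ∑ av : Fin n → Fin K, (∏ i, p i (av i)) * Real.exp (∑ i, t i (av i) h) ≤ 1
          rw [Finset.sum_congr rfl fun av _ => hrw av]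
          have hps := Finset.sum_prod_piFinset (ι := Fin n) (Finset.univ : Finset (Fin K))
            (fun i b => p i b * Real.exp (t i b h))
          rw [Fintype.piFinset_univ] at hps
          rw [hps]
          refine Finset.prod_le_one (fun i _ =>
            Finset.sum_nonneg fun a _ => mul_nonneg (hp i a).le (Real.exp_pos _).le)
            (fun i _ => ht_exp i h)
      _ = 1 := by simp
  have hmark := mul_meas_ge_le_integral_of_nonneg (μ := μ) (f := G)
    (ae_of_all _ hG_nonneg) Integrable.of_finite (1 / δ')
  have h3 : (1 / δ') * (μ {av | 1 / δ' ≤ G av}).toReal ≤ 1 := hmark.trans hint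
  have h2 : (μ {av | 1 / δ' ≤ G av}).toReal ≤ δ' := by
    calc (μ {av | 1 / δ' ≤ G av}).toReal
        = δ' * ((1 / δ') * (μ {av | 1 / δ' ≤ G av}).toReal) := by field_simp
      _ ≤ δ' * 1 := mul_le_mul_of_nonneg_left h3 hδ'.le
      _ = δ' := mul_one _
  have hμle : μ {av | 1 / δ' ≤ G av} ≤ ENNReal.ofReal δ' := by
    rw [ENNReal.le_ofReal_iff_toReal_le (measure_ne_top μ _) hδ'.le]
    exact h2
  refine le_trans (measure_mono ?_) hμle
  intro av hav
  simp only [Set.mem_setOf_eq] at hav ⊢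
  by_contra hlt
  push_neg at hlt
  apply hav
  intro Q hQ hKL
  haveI := hQ
  have hcom := change_of_measure P Q hKL (hsum_meas av) (hsum_bdd av)
    (show (0:ℝ) < 1 / δ' by positivity) hlt.le
  rwa [integral_finset_sum _ fun i _ => integrable_of_bdd (ht_meas i (av i))
    (fun h => ht_bdd i (av i) h)] at hcom

set_option maxHeartbeats 1600000 in
/-- **High-probability bound on the conditional estimation error `I₃`.**  For fixed contexts
`x 1, …, x n`, with actions drawn independently with `a i ∼ π0(·|x i)` and costs
`c i = c(x i, a i)`, with probability at least `1 − δ`, simultaneously for all posteriors `Q`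
on `H` (with finite KL divergence to the prior `P`), the conditional estimation error of the
IPS-α estimator is bounded by the KL term plus second-moment terms. -/
theorem conditional_estimation_error_bound
    {X : Type*} [MeasurableSpace X] {K : ℕ}
    {H : Type*} [MeasurableSpace H]
    (p0 c : X → Fin K → ℝ)
    (hp0pos : ∀ x a, 0 < p0 x a) (hp0sum : ∀ x, ∑ a, p0 x a = 1)
    (hc : ∀ x a, c x a ∈ Set.Icc (-1 : ℝ) 0)
    (ev : H → X → Fin K)
    (hev : Measurable fun q : H × X => ev q.1 q.2)
    (P : Measure H) [IsProbabilityMeasure P]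
    (n : ℕ) (hn : 0 < n) (x : Fin n → X)
    (lam : ℝ) (hlam : 0 < lam) (δ : ℝ) (hδ : δ ∈ Set.Ioo (0 : ℝ) 1)
    (α : ℝ) (hα : α ∈ Set.Icc (0 : ℝ) 1) :
    ENNReal.ofReal (1 - δ) ≤
      (Measure.pi fun i : Fin n => ∑ a, ENNReal.ofReal (p0 (x i) a) • Measure.dirac a)
        {av | ∀ Q : Measure H, IsProbabilityMeasure Q → klDiv Q P ≠ ⊤ →
          |(n : ℝ)⁻¹ * (∑ i, ∑ a, p0 (x i) a *
                ((Q {h | ev h (x i) = a}).toReal * c (x i) a / p0 (x i) a ^ α))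
              - (n : ℝ)⁻¹ * ∑ i, c (x i) (av i) * (Q {h | ev h (x i) = av i}).toReal
                  / p0 (x i) (av i) ^ α|
            ≤ ((klDiv Q P).toReal + Real.log (2 / δ)) / (n * lam)
              + lam / (2 * n) * ∑ i, ∑ a, p0 (x i) a *
                  ((Q {h | ev h (x i) = a}).toReal / p0 (x i) a ^ (2 * α))
              + lam / (2 * n) * ∑ i, (Q {h | ev h (x i) = av i}).toReal
                  * c (x i) (av i) ^ 2 / p0 (x i) (av i) ^ (2 * α)} := by
  classical
  obtain ⟨hδ0, hδ1⟩ := hδ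
  haveI hνinst : ∀ i : Fin n,
      IsProbabilityMeasure (∑ a, ENNReal.ofReal (p0 (x i) a) • Measure.dirac a) := by
    intro i
    constructor
    rw [Measure.finset_sum_apply]
    simp only [Measure.smul_apply, measure_univ, smul_eq_mul, mul_one]
    rw [← ENNReal.ofReal_sum_of_nonneg fun a _ => (hp0pos (x i) a).le, hp0sum (x i),
      ENNReal.ofReal_one]
  haveI : IsProbabilityMeasure
      (Measure.pi fun i : Fin n => ∑ a, ENNReal.ofReal (p0 (x i) a) • Measure.dirac a) :=
    inferInstance
  have hN : (0:ℝ) < n := by exact_mod_cast hn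
  set w : Fin n → Fin K → ℝ := fun i a => c (x i) a / p0 (x i) a ^ α with hw
  set s : Fin n → Fin K → Set H := fun i a => {h | ev h (x i) = a} with hs
  have hp' : ∀ (i : Fin n) (a : Fin K), 0 < p0 (x i) a := fun i a => hp0pos (x i) a
  have hpα : ∀ (i : Fin n) (a : Fin K), 0 < p0 (x i) a ^ α := fun i a =>
    Real.rpow_pos_of_pos (hp' i a) α
  have hp2α : ∀ (i : Fin n) (a : Fin K), 0 < p0 (x i) a ^ (2 * α) := fun i a =>
    Real.rpow_pos_of_pos (hp' i a) _
  have hsq : ∀ (i : Fin n) (a : Fin K), (p0 (x i) a ^ α) ^ 2 = p0 (x i) a ^ (2 * α) := by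
    intro i a
    rw [← Real.rpow_natCast (p0 (x i) a ^ α) 2, ← Real.rpow_mul (hp' i a).le]
    norm_num [mul_comm]
  have hev_i : ∀ i : Fin n, Measurable fun h : H => ev h (x i) := fun i =>
    hev.comp (measurable_id.prodMk measurable_const)
  have hs_meas : ∀ (i : Fin n) (a : Fin K), MeasurableSet (s i a) := fun i a => by
    rw [hs]; exact (hev_i i) (measurableSet_singleton a)
  have hcabs : ∀ (i : Fin n) (a : Fin K), |c (x i) a| ≤ 1 := fun i a =>
    abs_le.mpr ⟨(hc (x i) a).1, le_trans (hc (x i) a).2 zero_le_one⟩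
  have hw_nonpos : ∀ (i : Fin n) (a : Fin K), w i a ≤ 0 := fun i a =>
    div_nonpos_of_nonpos_of_nonneg (hc (x i) a).2 (hpα i a).le
  have hw_abs : ∀ (i : Fin n) (a : Fin K), |w i a| ≤ 1 / p0 (x i) a ^ α := by
    intro i a
    rw [hw]
    simp only []
    rw [abs_div, abs_of_pos (hpα i a)]
    exact div_le_div₀ zero_le_one (hcabs i a) (hpα i a) (le_refl _)
  set M : ℝ := 1 + ∑ i, ∑ a, 1 / p0 (x i) a ^ α with hM
  have hM0 : (0:ℝ) ≤ M := by
    rw [hM]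
    have : (0:ℝ) ≤ ∑ i, ∑ a, 1 / p0 (x i) a ^ α :=
      Finset.sum_nonneg fun i _ => Finset.sum_nonneg fun a _ =>
        div_nonneg zero_le_one (hpα i a).le
    linarith
  have hw_le_M : ∀ (i : Fin n) (a : Fin K), |w i a| ≤ M := by
    intro i a
    refine (hw_abs i a).trans ?_
    have h1 : 1 / p0 (x i) a ^ α ≤ ∑ b, 1 / p0 (x i) b ^ α :=
      Finset.single_le_sum (f := fun b => 1 / p0 (x i) b ^ α)
        (fun b _ => div_nonneg zero_le_one (hpα i b).le) (Finset.mem_univ a)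
    have h2 : ∑ b, 1 / p0 (x i) b ^ α ≤ ∑ j, ∑ b, 1 / p0 (x j) b ^ α :=
      Finset.single_le_sum (f := fun j => ∑ b, 1 / p0 (x j) b ^ α)
        (fun j _ => Finset.sum_nonneg fun b _ => div_nonneg zero_le_one (hpα j b).le)
        (Finset.mem_univ i)
    rw [hM]; linarith
  have hp0le1 : ∀ (i : Fin n) (a : Fin K), p0 (x i) a ≤ 1 := by
    intro i a
    rw [← hp0sum (x i)]
    exact Finset.single_le_sum (fun b _ => (hp' i b).le) (Finset.mem_univ a)
  have hχ_abs : ∀ (i : Fin n) (a : Fin K) (h : H), |if ev h (x i) = a then w i a else 0| ≤ M := by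
    intro i a h
    by_cases hba : ev h (x i) = a
    · rw [if_pos hba]; exact hw_le_M i a
    · rw [if_neg hba]; simpa using hM0
  have hm_abs : ∀ (i : Fin n) (h : H),
      |∑ b, p0 (x i) b * (if ev h (x i) = b then w i b else 0)| ≤ M := by
    intro i h
    calc |∑ b, p0 (x i) b * (if ev h (x i) = b then w i b else 0)|
        ≤ ∑ b, |p0 (x i) b * (if ev h (x i) = b then w i b else 0)| :=
          Finset.abs_sum_le_sum_abs _ _
      _ ≤ ∑ b, p0 (x i) b * M := by
          refine Finset.sum_le_sum fun b _ => ?_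
          rw [abs_mul, abs_of_pos (hp' i b)]
          exact mul_le_mul_of_nonneg_left (hχ_abs i b h) (hp' i b).le
      _ = M := by rw [← Finset.sum_mul, hp0sum (x i), one_mul]
  have hχ2_abs : ∀ (i : Fin n) (a : Fin K) (h : H),
      |(if ev h (x i) = a then w i a else 0) ^ 2| ≤ M ^ 2 := by
    intro i a h
    rw [abs_of_nonneg (sq_nonneg _), ← sq_abs]
    exact pow_le_pow_left₀ (abs_nonneg _) (hχ_abs i a h) 2
  have hV_abs : ∀ (i : Fin n) (h : H),
      |∑ b, p0 (x i) b * (if ev h (x i) = b then w i b else 0) ^ 2| ≤ M ^ 2 := by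
    intro i h
    calc |∑ b, p0 (x i) b * (if ev h (x i) = b then w i b else 0) ^ 2|
        ≤ ∑ b, |p0 (x i) b * (if ev h (x i) = b then w i b else 0) ^ 2| :=
          Finset.abs_sum_le_sum_abs _ _
      _ ≤ ∑ b, p0 (x i) b * M ^ 2 := by
          refine Finset.sum_le_sum fun b _ => ?_
          rw [abs_mul, abs_of_pos (hp' i b)]
          exact mul_le_mul_of_nonneg_left (hχ2_abs i b h) (hp' i b).le
      _ = M ^ 2 := by rw [← Finset.sum_mul, hp0sum (x i), one_mul]
  set tA : Fin n → Fin K → H → ℝ := fun i a h =>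
    lam * ((if ev h (x i) = a then w i a else 0)
        - ∑ b, p0 (x i) b * (if ev h (x i) = b then w i b else 0))
      - lam ^ 2 / 2 * ∑ b, p0 (x i) b * (if ev h (x i) = b then w i b else 0) ^ 2 with htA
  set tB : Fin n → Fin K → H → ℝ := fun i a h =>
    lam * ((∑ b, p0 (x i) b * (if ev h (x i) = b then w i b else 0))
        - (if ev h (x i) = a then w i a else 0))
      - lam ^ 2 / 2 * (if ev h (x i) = a then w i a else 0) ^ 2 with htB
  have hχ_eq : ∀ (i : Fin n) (a : Fin K), (fun h : H => if ev h (x i) = a then w i a else 0)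
      = (s i a).indicator (fun _ => w i a) := by
    intro i a; funext h
    rw [Set.indicator_apply]
    by_cases hba : ev h (x i) = a
    · rw [if_pos hba, if_pos (show h ∈ s i a by rw [hs]; exact hba)]
    · rw [if_neg hba, if_neg (show h ∉ s i a by rw [hs]; exact hba)]
  have hχ2_eq : ∀ (i : Fin n) (a : Fin K),
      (fun h : H => (if ev h (x i) = a then w i a else 0) ^ 2)
        = (s i a).indicator (fun _ => w i a ^ 2) := by
    intro i a; funext h
    rw [Set.indicator_apply]
    by_cases hba : ev h (x i) = a
    · rw [if_pos hba, if_pos (show h ∈ s i a by rw [hs]; exact hba)]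
    · rw [if_neg hba, if_neg (show h ∉ s i a by rw [hs]; exact hba)]
      exact zero_pow (by norm_num)
  have hχ_meas : ∀ (i : Fin n) (a : Fin K),
      Measurable (fun h : H => if ev h (x i) = a then w i a else 0) := by
    intro i a; rw [hχ_eq i a]
    exact measurable_const.indicator (hs_meas i a)
  have hχ2_meas : ∀ (i : Fin n) (a : Fin K),
      Measurable (fun h : H => (if ev h (x i) = a then w i a else 0) ^ 2) := by
    intro i a; rw [hχ2_eq i a]
    exact measurable_const.indicator (hs_meas i a)
  have hm_meas : ∀ i : Fin n,
      Measurable (fun h : H => ∑ b, p0 (x i) b * (if ev h (x i) = b then w i b else 0)) :=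
    fun i => Finset.measurable_sum _ fun b _ => (hχ_meas i b).const_mul _
  have hV_meas : ∀ i : Fin n,
      Measurable (fun h : H => ∑ b, p0 (x i) b * (if ev h (x i) = b then w i b else 0) ^ 2) :=
    fun i => Finset.measurable_sum _ fun b _ => (hχ2_meas i b).const_mul _
  have htA_meas : ∀ (i : Fin n) (a : Fin K), Measurable (tA i a) := by
    intro i a
    simp only [htA]
    exact (((hχ_meas i a).sub (hm_meas i)).const_mul lam).sub ((hV_meas i).const_mul _)
  have htB_meas : ∀ (i : Fin n) (a : Fin K), Measurable (tB i a) := by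
    intro i a
    simp only [htB]
    exact (((hm_meas i).sub (hχ_meas i a)).const_mul lam).sub ((hχ2_meas i a).const_mul _)
  set CT : ℝ := lam * (M + M) + lam ^ 2 / 2 * M ^ 2 with hCT
  have habs3 : ∀ X' Y' Z' : ℝ, |X'| ≤ M → |Y'| ≤ M → |Z'| ≤ M ^ 2 →
      |lam * (X' - Y') - lam ^ 2 / 2 * Z'| ≤ CT := by
    intro X' Y' Z' hX hY hZ
    have h1 : |lam * (X' - Y')| ≤ lam * (M + M) := by
      rw [abs_mul, abs_of_pos hlam]
      refine mul_le_mul_of_nonneg_left ?_ hlam.le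
      calc |X' - Y'| ≤ |X'| + |Y'| := abs_sub _ _
        _ ≤ M + M := add_le_add hX hY
    have h2 : |lam ^ 2 / 2 * Z'| ≤ lam ^ 2 / 2 * M ^ 2 := by
      rw [abs_mul, abs_of_nonneg (by positivity : (0:ℝ) ≤ lam ^ 2 / 2)]
      exact mul_le_mul_of_nonneg_left hZ (by positivity)
    calc |lam * (X' - Y') - lam ^ 2 / 2 * Z'|
        ≤ |lam * (X' - Y')| + |lam ^ 2 / 2 * Z'| := abs_sub _ _
      _ ≤ CT := by rw [hCT]; exact add_le_add h1 h2
  have htA_bdd : ∀ (i : Fin n) (a : Fin K) (h : H), |tA i a h| ≤ CT := fun i a h => by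
    simp only [htA]; exact habs3 _ _ _ (hχ_abs i a h) (hm_abs i h) (hV_abs i h)
  have htB_bdd : ∀ (i : Fin n) (a : Fin K) (h : H), |tB i a h| ≤ CT := fun i a h => by
    simp only [htB]; exact habs3 _ _ _ (hm_abs i h) (hχ_abs i a h) (hχ2_abs i a h)
  have hcol1 : ∀ (i : Fin n) (h : H),
      ∑ b, p0 (x i) b * (if ev h (x i) = b then w i b else 0)
        = p0 (x i) (ev h (x i)) * w i (ev h (x i)) := by
    intro i h
    rw [Finset.sum_eq_single (ev h (x i))]
    · rw [if_pos rfl]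
    · intro b _ hb
      rw [if_neg (fun hh => hb hh.symm), mul_zero]
    · intro habs; exact absurd (Finset.mem_univ _) habs
  have hcol2 : ∀ (i : Fin n) (h : H),
      ∑ b, p0 (x i) b * (if ev h (x i) = b then w i b else 0) ^ 2
        = p0 (x i) (ev h (x i)) * w i (ev h (x i)) ^ 2 := by
    intro i h
    rw [Finset.sum_eq_single (ev h (x i))]
    · rw [if_pos rfl]
    · intro b _ hb
      rw [if_neg (fun hh => hb hh.symm)]
      norm_num
    · intro habs; exact absurd (Finset.mem_univ _) habs
  have htA_exp : ∀ (i : Fin n) (h : H), ∑ a, p0 (x i) a * Real.exp (tA i a h) ≤ 1 := by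
    intro i h
    have hbm : ∀ a : Fin K, tA i a h =
        lam * ((if ev h (x i) = a then w i (ev h (x i)) else 0)
            - p0 (x i) (ev h (x i)) * w i (ev h (x i)))
          - lam ^ 2 / 2 * (p0 (x i) (ev h (x i)) * w i (ev h (x i)) ^ 2) := by
      intro a
      simp only [htA]
      rw [hcol1 i h, hcol2 i h]
      by_cases hba : ev h (x i) = a
      · rw [if_pos hba, if_pos hba, hba]
      · rw [if_neg hba, if_neg hba]
    calc ∑ a, p0 (x i) a * Real.exp (tA i a h)
        = p0 (x i) (ev h (x i)) * Real.exp (lam * (w i (ev h (x i))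
              - p0 (x i) (ev h (x i)) * w i (ev h (x i)))
            - lam ^ 2 / 2 * (p0 (x i) (ev h (x i)) * w i (ev h (x i)) ^ 2))
          + (1 - p0 (x i) (ev h (x i))) * Real.exp (lam * ((0:ℝ)
              - p0 (x i) (ev h (x i)) * w i (ev h (x i)))
            - lam ^ 2 / 2 * (p0 (x i) (ev h (x i)) * w i (ev h (x i)) ^ 2)) := by
          rw [Finset.sum_congr rfl fun a _ => by rw [hbm a]]
          rw [← Finset.add_sum_erase _ _ (Finset.mem_univ (ev h (x i)))]
          rw [if_pos rfl]
          congr 1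
          rw [Finset.sum_congr rfl (fun a ha => by
            rw [if_neg (fun hh => (Finset.mem_erase.mp ha).1 hh.symm)]),
            ← Finset.sum_mul, Finset.sum_erase_eq_sub (Finset.mem_univ _), hp0sum (x i)]
      _ ≤ 1 := by
          have hfa := factA (pb := p0 (x i) (ev h (x i))) (v := w i (ev h (x i)))
            (hp' i _).le (hw_nonpos i _) hlam.le
          linarith
  have htB_exp : ∀ (i : Fin n) (h : H), ∑ a, p0 (x i) a * Real.exp (tB i a h) ≤ 1 := by
    intro i h
    have hbm : ∀ a : Fin K, tB i a h =
        lam * (p0 (x i) (ev h (x i)) * w i (ev h (x i))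
            - (if ev h (x i) = a then w i (ev h (x i)) else 0))
          - lam ^ 2 / 2 * (if ev h (x i) = a then w i (ev h (x i)) else 0) ^ 2 := by
      intro a
      simp only [htB]
      rw [hcol1 i h]
      by_cases hba : ev h (x i) = a
      · rw [if_pos hba, if_pos hba, hba]
      · rw [if_neg hba, if_neg hba]
    calc ∑ a, p0 (x i) a * Real.exp (tB i a h)
        = p0 (x i) (ev h (x i)) * Real.exp (lam * (p0 (x i) (ev h (x i)) * w i (ev h (x i))
              - w i (ev h (x i)))
            - lam ^ 2 / 2 * w i (ev h (x i)) ^ 2)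
          + (1 - p0 (x i) (ev h (x i))) * Real.exp (lam * (p0 (x i) (ev h (x i)) * w i (ev h (x i))
              - (0:ℝ)) - lam ^ 2 / 2 * (0:ℝ) ^ 2) := by
          rw [Finset.sum_congr rfl fun a _ => by rw [hbm a]]
          rw [← Finset.add_sum_erase _ _ (Finset.mem_univ (ev h (x i)))]
          rw [if_pos rfl]
          congr 1
          rw [Finset.sum_congr rfl (fun a ha => by
            rw [if_neg (fun hh => (Finset.mem_erase.mp ha).1 hh.symm)]),
            ← Finset.sum_mul, Finset.sum_erase_eq_sub (Finset.mem_univ _), hp0sum (x i)]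
      _ ≤ 1 := by
          have hfb := factB (pb := p0 (x i) (ev h (x i))) (v := w i (ev h (x i)))
            (hp' i _).le (hw_nonpos i _) hlam.le
          linarith
  have hA := pac_core P (fun i a => p0 (x i) a) hp' (fun i => hp0sum (x i)) tA htA_meas CT
    htA_bdd htA_exp (δ / 2) (by linarith)
  have hB := pac_core P (fun i a => p0 (x i) a) hp' (fun i => hp0sum (x i)) tB htB_meas CT
    htB_bdd htB_exp (δ / 2) (by linarith)
  -- Q-side integral identities
  have hQind : ∀ (Q : Measure H) (i : Fin n) (a : Fin K),
      ∫ h, (if ev h (x i) = a then w i a else 0) ∂Q = w i a * (Q (s i a)).toReal := by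
    intro Q i a
    rw [hχ_eq i a, integral_indicator_const _ (hs_meas i a), smul_eq_mul, mul_comm, measureReal_def]
  have hQind2 : ∀ (Q : Measure H) (i : Fin n) (a : Fin K),
      ∫ h, (if ev h (x i) = a then w i a else 0) ^ 2 ∂Q = w i a ^ 2 * (Q (s i a)).toReal := by
    intro Q i a
    rw [hχ2_eq i a, integral_indicator_const _ (hs_meas i a), smul_eq_mul, mul_comm, measureReal_def]
  have hQm : ∀ (Q : Measure H), IsProbabilityMeasure Q → ∀ i : Fin n,
      ∫ h, (∑ b, p0 (x i) b * (if ev h (x i) = b then w i b else 0)) ∂Q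
        = ∑ b, p0 (x i) b * (w i b * (Q (s i b)).toReal) := by
    intro Q hQ i
    haveI := hQ
    rw [integral_finset_sum _ fun b _ =>
      (integrable_of_bdd (hχ_meas i b) (fun h => hχ_abs i b h)).const_mul _]
    exact Finset.sum_congr rfl fun b _ => by rw [integral_const_mul, hQind Q i b]
  have hQV : ∀ (Q : Measure H), IsProbabilityMeasure Q → ∀ i : Fin n,
      ∫ h, (∑ b, p0 (x i) b * (if ev h (x i) = b then w i b else 0) ^ 2) ∂Q
        = ∑ b, p0 (x i) b * (w i b ^ 2 * (Q (s i b)).toReal) := by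
    intro Q hQ i
    haveI := hQ
    rw [integral_finset_sum _ fun b _ =>
      (integrable_of_bdd (hχ2_meas i b) (fun h => hχ2_abs i b h)).const_mul _]
    exact Finset.sum_congr rfl fun b _ => by rw [integral_const_mul, hQind2 Q i b]
  have hIA : ∀ (Q : Measure H), IsProbabilityMeasure Q → ∀ (i : Fin n) (a : Fin K),
      ∫ h, tA i a h ∂Q
        = lam * (w i a * (Q (s i a)).toReal
            - ∑ b, p0 (x i) b * (w i b * (Q (s i b)).toReal))
          - lam ^ 2 / 2 * ∑ b, p0 (x i) b * (w i b ^ 2 * (Q (s i b)).toReal) := by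
    intro Q hQ i a
    haveI := hQ
    have i1 : Integrable (fun h => (if ev h (x i) = a then w i a else 0)
        - ∑ b, p0 (x i) b * (if ev h (x i) = b then w i b else 0)) Q :=
      (integrable_of_bdd (hχ_meas i a) (fun h => hχ_abs i a h)).sub
        (integrable_of_bdd (hm_meas i) (fun h => hm_abs i h))
    have i2 : Integrable
        (fun h => ∑ b, p0 (x i) b * (if ev h (x i) = b then w i b else 0) ^ 2) Q :=
      integrable_of_bdd (hV_meas i) (fun h => hV_abs i h)
    simp only [htA]
    rw [integral_sub (i1.const_mul lam) (i2.const_mul _), integral_const_mul, integral_const_mul,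
      integral_sub (integrable_of_bdd (hχ_meas i a) (fun h => hχ_abs i a h))
        (integrable_of_bdd (hm_meas i) (fun h => hm_abs i h)),
      hQind Q i a, hQm Q hQ i, hQV Q hQ i]
  have hIB : ∀ (Q : Measure H), IsProbabilityMeasure Q → ∀ (i : Fin n) (a : Fin K),
      ∫ h, tB i a h ∂Q
        = lam * ((∑ b, p0 (x i) b * (w i b * (Q (s i b)).toReal))
            - w i a * (Q (s i a)).toReal)
          - lam ^ 2 / 2 * (w i a ^ 2 * (Q (s i a)).toReal) := by
    intro Q hQ i a
    haveI := hQ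
    have i1 : Integrable (fun h => (∑ b, p0 (x i) b * (if ev h (x i) = b then w i b else 0))
        - (if ev h (x i) = a then w i a else 0)) Q :=
      (integrable_of_bdd (hm_meas i) (fun h => hm_abs i h)).sub
        (integrable_of_bdd (hχ_meas i a) (fun h => hχ_abs i a h))
    have i2 : Integrable (fun h => (if ev h (x i) = a then w i a else 0) ^ 2) Q :=
      integrable_of_bdd (hχ2_meas i a) (fun h => hχ2_abs i a h)
    simp only [htB]
    rw [integral_sub (i1.const_mul lam) (i2.const_mul _), integral_const_mul, integral_const_mul,
      integral_sub (integrable_of_bdd (hm_meas i) (fun h => hm_abs i h))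
        (integrable_of_bdd (hχ_meas i a) (fun h => hχ_abs i a h)),
      hQind Q i a, hQm Q hQ i, hQind2 Q i a]
  have hSA : ∀ (Q : Measure H), IsProbabilityMeasure Q → ∀ av : Fin n → Fin K,
      ∑ i, ∫ h, tA i (av i) h ∂Q
        = lam * ((∑ i, w i (av i) * (Q (s i (av i))).toReal)
            - ∑ i, ∑ b, p0 (x i) b * (w i b * (Q (s i b)).toReal))
          - lam ^ 2 / 2 * ∑ i, ∑ b, p0 (x i) b * (w i b ^ 2 * (Q (s i b)).toReal) := by
    intro Q hQ av
    rw [Finset.sum_congr rfl fun i _ => hIA Q hQ i (av i)]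
    rw [Finset.sum_sub_distrib, ← Finset.mul_sum, ← Finset.mul_sum, Finset.sum_sub_distrib]
  have hSB : ∀ (Q : Measure H), IsProbabilityMeasure Q → ∀ av : Fin n → Fin K,
      ∑ i, ∫ h, tB i (av i) h ∂Q
        = lam * ((∑ i, ∑ b, p0 (x i) b * (w i b * (Q (s i b)).toReal))
            - ∑ i, w i (av i) * (Q (s i (av i))).toReal)
          - lam ^ 2 / 2 * ∑ i, w i (av i) ^ 2 * (Q (s i (av i))).toReal := by
    intro Q hQ av
    rw [Finset.sum_congr rfl fun i _ => hIB Q hQ i (av i)]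
    rw [Finset.sum_sub_distrib, ← Finset.mul_sum, ← Finset.mul_sum, Finset.sum_sub_distrib]
  -- set bad events
  set badA : Set (Fin n → Fin K) := {av | ¬ ∀ Q : Measure H, IsProbabilityMeasure Q →
    klDiv Q P ≠ ⊤ → ∑ i, ∫ h, tA i (av i) h ∂Q
      ≤ (klDiv Q P).toReal + Real.log (1 / (δ / 2))} with hbadA
  set badB : Set (Fin n → Fin K) := {av | ¬ ∀ Q : Measure H, IsProbabilityMeasure Q →
    klDiv Q P ≠ ⊤ → ∑ i, ∫ h, tB i (av i) h ∂Q
      ≤ (klDiv Q P).toReal + Real.log (1 / (δ / 2))} with hbadB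
  have hμu : (Measure.pi fun i : Fin n => ∑ a, ENNReal.ofReal (p0 (x i) a) • Measure.dirac a)
      (badA ∪ badB) ≤ ENNReal.ofReal δ := by
    refine le_trans (measure_union_le _ _) ?_
    calc _ ≤ ENNReal.ofReal (δ / 2) + ENNReal.ofReal (δ / 2) := add_le_add hA hB
      _ = ENNReal.ofReal δ := by
          rw [← ENNReal.ofReal_add (by linarith) (by linarith)]
          norm_num
  have hlog : Real.log (1 / (δ / 2)) = Real.log (2 / δ) := by rw [one_div_div]
  have hsub : (badA ∪ badB)ᶜ ⊆
      {av : Fin n → Fin K | ∀ Q : Measure H, IsProbabilityMeasure Q → klDiv Q P ≠ ⊤ →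
        |(n : ℝ)⁻¹ * (∑ i, ∑ a, p0 (x i) a *
              ((Q {h | ev h (x i) = a}).toReal * c (x i) a / p0 (x i) a ^ α))
            - (n : ℝ)⁻¹ * ∑ i, c (x i) (av i) * (Q {h | ev h (x i) = av i}).toReal
                / p0 (x i) (av i) ^ α|
          ≤ ((klDiv Q P).toReal + Real.log (2 / δ)) / (n * lam)
            + lam / (2 * n) * ∑ i, ∑ a, p0 (x i) a *
                ((Q {h | ev h (x i) = a}).toReal / p0 (x i) a ^ (2 * α))
            + lam / (2 * n) * ∑ i, (Q {h | ev h (x i) = av i}).toReal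
                * c (x i) (av i) ^ 2 / p0 (x i) (av i) ^ (2 * α)} := by
    intro av hav
    simp only [Set.mem_compl_iff, Set.mem_union, not_or, hbadA, hbadB, Set.mem_setOf_eq,
      not_not] at hav
    obtain ⟨havA, havB⟩ := hav
    rw [Set.mem_setOf_eq]
    intro Q hQ hKL
    haveI := hQ
    have h1 := havA Q hQ hKL
    have h2 := havB Q hQ hKL
    rw [hSA Q hQ av, hlog] at h1
    rw [hSB Q hQ av, hlog] at h2
    have hKLT0 : 0 ≤ (klDiv Q P).toReal := ENNReal.toReal_nonneg
    have hRe : ∑ i, ∑ b, p0 (x i) b * (w i b * (Q (s i b)).toReal)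
        = ∑ i, ∑ a, p0 (x i) a *
            ((Q {h | ev h (x i) = a}).toReal * c (x i) a / p0 (x i) a ^ α) := by
      refine Finset.sum_congr rfl fun i _ => Finset.sum_congr rfl fun b _ => ?_
      simp only [hw, hs]
      ring
    have hRhe : ∑ i, w i (av i) * (Q (s i (av i))).toReal
        = ∑ i, c (x i) (av i) * (Q {h | ev h (x i) = av i}).toReal
            / p0 (x i) (av i) ^ α := by
      refine Finset.sum_congr rfl fun i _ => ?_
      simp only [hw, hs]
      ring
    have hT3e : ∑ i, w i (av i) ^ 2 * (Q (s i (av i))).toReal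
        = ∑ i, (Q {h | ev h (x i) = av i}).toReal
            * c (x i) (av i) ^ 2 / p0 (x i) (av i) ^ (2 * α) := by
      refine Finset.sum_congr rfl fun i _ => ?_
      simp only [hw, hs]
      rw [div_pow, hsq i (av i)]
      ring
    have hSVle : ∑ i, ∑ b, p0 (x i) b * (w i b ^ 2 * (Q (s i b)).toReal)
        ≤ ∑ i, ∑ a, p0 (x i) a *
            ((Q {h | ev h (x i) = a}).toReal / p0 (x i) a ^ (2 * α)) := by
      refine Finset.sum_le_sum fun i _ => Finset.sum_le_sum fun b _ => ?_
      simp only [hw, hs]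
      have hc2 : c (x i) b ^ 2 ≤ 1 := by nlinarith [(hc (x i) b).1, (hc (x i) b).2]
      have hq0 : (0:ℝ) ≤ (Q {h | ev h (x i) = b}).toReal := ENNReal.toReal_nonneg
      rw [div_pow, hsq i b]
      refine mul_le_mul_of_nonneg_left ?_ (hp' i b).le
      calc c (x i) b ^ 2 / p0 (x i) b ^ (2 * α) * (Q {h | ev h (x i) = b}).toReal
          = (c (x i) b ^ 2 * (Q {h | ev h (x i) = b}).toReal) / p0 (x i) b ^ (2 * α) := by
            ring
        _ ≤ (Q {h | ev h (x i) = b}).toReal / p0 (x i) b ^ (2 * α) := by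
            apply (div_le_div_iff_of_pos_right (hp2α i b)).mpr
            nlinarith
    have hT2nn : (0:ℝ) ≤ ∑ i, ∑ a, p0 (x i) a *
        ((Q {h | ev h (x i) = a}).toReal / p0 (x i) a ^ (2 * α)) :=
      Finset.sum_nonneg fun i _ => Finset.sum_nonneg fun a _ =>
        mul_nonneg (hp' i a).le (div_nonneg ENNReal.toReal_nonneg (hp2α i a).le)
    have hT3nn : (0:ℝ) ≤ ∑ i, (Q {h | ev h (x i) = av i}).toReal
        * c (x i) (av i) ^ 2 / p0 (x i) (av i) ^ (2 * α) :=
      Finset.sum_nonneg fun i _ => div_nonneg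
        (mul_nonneg ENNReal.toReal_nonneg (sq_nonneg _)) (hp2α i (av i)).le
    rw [hRe, hRhe] at h1 h2
    rw [hT3e] at h2
    set KLT := (klDiv Q P).toReal with hKLT
    set L := Real.log (2 / δ) with hL
    set R := ∑ i, ∑ a, p0 (x i) a *
        ((Q {h | ev h (x i) = a}).toReal * c (x i) a / p0 (x i) a ^ α) with hR
    set Rh := ∑ i, c (x i) (av i) * (Q {h | ev h (x i) = av i}).toReal
        / p0 (x i) (av i) ^ α with hRh
    set T2 := ∑ i, ∑ a, p0 (x i) a *
        ((Q {h | ev h (x i) = a}).toReal / p0 (x i) a ^ (2 * α)) with hT2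
    set T3 := ∑ i, (Q {h | ev h (x i) = av i}).toReal
        * c (x i) (av i) ^ 2 / p0 (x i) (av i) ^ (2 * α) with hT3
    -- h1 : lam * (Rh - R) - lam^2/2 * SV ≤ KLT + L, with SV ≤ T2
    -- h2 : lam * (R - Rh) - lam^2/2 * T3 ≤ KLT + L
    have hup : lam * (R - Rh) ≤ KLT + L + lam ^ 2 / 2 * T2 + lam ^ 2 / 2 * T3 := by
      nlinarith [mul_nonneg (by positivity : (0:ℝ) ≤ lam ^ 2 / 2) hT2nn]
    have hdown : lam * (Rh - R) ≤ KLT + L + lam ^ 2 / 2 * T2 + lam ^ 2 / 2 * T3 := by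
      have hSV2 : lam ^ 2 / 2 * (∑ i, ∑ b, p0 (x i) b * (w i b ^ 2 * (Q (s i b)).toReal))
          ≤ lam ^ 2 / 2 * T2 :=
        mul_le_mul_of_nonneg_left hSVle (by positivity)
      nlinarith [mul_nonneg (by positivity : (0:ℝ) ≤ lam ^ 2 / 2) hT3nn]
    have e2 : (KLT + L) / ((n:ℝ) * lam) + lam / (2 * (n:ℝ)) * T2 + lam / (2 * (n:ℝ)) * T3
        = (KLT + L + lam ^ 2 / 2 * T2 + lam ^ 2 / 2 * T3) / ((n:ℝ) * lam) := by
      field_simp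
    rw [abs_le]
    constructor
    · have e1 : -((KLT + L) / ((n:ℝ) * lam) + lam / (2 * (n:ℝ)) * T2
          + lam / (2 * (n:ℝ)) * T3) ≤ (n:ℝ)⁻¹ * R - (n:ℝ)⁻¹ * Rh ↔
          (n:ℝ)⁻¹ * Rh - (n:ℝ)⁻¹ * R ≤ (KLT + L) / ((n:ℝ) * lam)
            + lam / (2 * (n:ℝ)) * T2 + lam / (2 * (n:ℝ)) * T3 := by
        constructor <;> intro <;> linarith
      rw [e1, show (n:ℝ)⁻¹ * Rh - (n:ℝ)⁻¹ * R = (lam * (Rh - R)) / ((n:ℝ) * lam) by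
        field_simp, e2]
      exact (div_le_div_iff_of_pos_right (by positivity)).mpr hdown
    · rw [show (n:ℝ)⁻¹ * R - (n:ℝ)⁻¹ * Rh = (lam * (R - Rh)) / ((n:ℝ) * lam) by
        field_simp, e2]
      exact (div_le_div_iff_of_pos_right (by positivity)).mpr hup
  calc ENNReal.ofReal (1 - δ)
      = 1 - ENNReal.ofReal δ := by
        rw [← ENNReal.ofReal_one, ← ENNReal.ofReal_sub _ hδ0.le]
    _ ≤ 1 - (Measure.pi fun i : Fin n => ∑ a, ENNReal.ofReal (p0 (x i) a) • Measure.dirac a)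
          (badA ∪ badB) := tsub_le_tsub_left hμu 1
    _ = (Measure.pi fun i : Fin n => ∑ a, ENNReal.ofReal (p0 (x i) a) • Measure.dirac a)
          ((badA ∪ badB)ᶜ) := by
        rw [measure_compl ((Set.toFinite _).measurableSet) (measure_ne_top _ _), measure_univ]
    _ ≤ _ := measure_mono hsub
end
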